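/- arXiv:1512.05539 — 8 statements merged into one kernel-verified Lean document; each statement's English description precedes it below -/
import Mathlib

section
/- Let ρ be a density matrix on the N-partite Hilbert space, i.e. a positive semidefinite matrix indexed by (Fin N → Fin d) with trace 1. If ρ is fully separable, then for every subsystem j : Fin N the purity of the whole dominates the purity of the one-qudit reduced matrix: tr ρ² ≤ tr (ρ_j)². -/
open scoped ComplexOrder

noncomputable section

/-- Extend an assignment `g` on the indices other than `j` by the value `x` at position `j`. -/
def insertAt {N d : ℕ} (j : Fin N) (x : Fin d) (g : {i : Fin N // i ≠ j} → Fin d) :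
    Fin N → Fin d :=
  fun i => if h : i = j then x else g ⟨i, h⟩

/-- The one-qudit reduced density matrix at site `j`. -/
def reduced {N d : ℕ} (ρ : Matrix (Fin N → Fin d) (Fin N → Fin d) ℂ) (j : Fin N) :
    Matrix (Fin d) (Fin d) ℂ :=
  Matrix.of fun x y => ∑ g : {i : Fin N // i ≠ j} → Fin d,
    ρ (insertAt j x g) (insertAt j y g)

/-- Full separability of an `N`-partite `d`-level state. -/
def FullySeparable {N d : ℕ} (ρ : Matrix (Fin N → Fin d) (Fin N → Fin d) ℂ) : Prop :=
  ∃ (m : ℕ) (p : Fin m → ℝ) (σ : Fin m → Fin N → Matrix (Fin d) (Fin d) ℂ),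
    (∀ i, 0 ≤ p i) ∧ (∑ i, p i = 1) ∧
    (∀ i k, (σ i k).PosSemidef ∧ (σ i k).trace = 1) ∧
    (∀ a b, ρ a b = ∑ i, (p i : ℂ) * ∏ k, σ i k (a k) (b k))

namespace PurityAux

open Matrix

lemma trace_mul_psd_eq {n : Type*} [Fintype n] [DecidableEq n] (C D : Matrix n n ℂ) :
    (Cᴴ * C * (Dᴴ * D)).trace = ∑ i, ∑ j, ((‖(C * Dᴴ) i j‖ : ℂ) ^ 2) := by
  have h1 : Cᴴ * C * (Dᴴ * D) = Cᴴ * (C * Dᴴ * D) := by noncomm_ring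
  have h2 : (Cᴴ * C * (Dᴴ * D)).trace = ((C * Dᴴ) * (C * Dᴴ)ᴴ).trace := by
    rw [h1, Matrix.trace_mul_comm, Matrix.conjTranspose_mul, Matrix.conjTranspose_conjTranspose]
    noncomm_ring
  rw [h2, Matrix.trace]
  refine Finset.sum_congr rfl fun i _ => ?_
  simp only [Matrix.diag, Matrix.mul_apply, Matrix.conjTranspose_apply]
  exact Finset.sum_congr rfl fun j _ => Complex.mul_conj' _

lemma trace_self_real {n : Type*} [Fintype n] [DecidableEq n] (C : Matrix n n ℂ) :
    (Cᴴ * C).trace = ((∑ i, ∑ j, ‖C j i‖ ^ 2 : ℝ) : ℂ) := by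
  rw [Matrix.trace]
  push_cast
  refine Finset.sum_congr rfl fun i _ => ?_
  simp only [Matrix.diag, Matrix.mul_apply, Matrix.conjTranspose_apply]
  refine Finset.sum_congr rfl fun j _ => ?_
  rw [mul_comm]
  exact Complex.mul_conj' _

lemma trace_mul_key {n : Type*} [Fintype n] [DecidableEq n] {A B : Matrix n n ℂ}
    (hA : A.PosSemidef) (hB : B.PosSemidef) (hA1 : A.trace = 1) (hB1 : B.trace = 1) :
    ∃ t : ℝ, 0 ≤ t ∧ t ≤ 1 ∧ (A * B).trace = (t : ℂ) := by
  obtain ⟨C, rfl⟩ : ∃ C : Matrix n n ℂ, _ = Cᴴ * C := by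
    open scoped MatrixOrder in exact CStarAlgebra.nonneg_iff_eq_star_mul_self.mp hA.nonneg
  obtain ⟨D, rfl⟩ : ∃ D : Matrix n n ℂ, _ = Dᴴ * D := by
    open scoped MatrixOrder in exact CStarAlgebra.nonneg_iff_eq_star_mul_self.mp hB.nonneg
  refine ⟨∑ i, ∑ j, ‖(C * Dᴴ) i j‖ ^ 2, by positivity, ?_,
    by rw [trace_mul_psd_eq]; push_cast; ring_nf⟩
  have hC : (∑ i, ∑ j, ‖C j i‖ ^ 2 : ℝ) = 1 := by
    have := (trace_self_real C).symm.trans hA1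
    exact_mod_cast this
  have hD : (∑ i, ∑ j, ‖D j i‖ ^ 2 : ℝ) = 1 := by
    have := (trace_self_real D).symm.trans hB1
    exact_mod_cast this
  have hb : ∀ i j, ‖(C * Dᴴ) i j‖ ^ 2 ≤ (∑ k, ‖C i k‖ ^ 2) * (∑ k, ‖D j k‖ ^ 2) := by
    intro i j
    have h1 : ‖(C * Dᴴ) i j‖ ≤ ∑ k, ‖C i k‖ * ‖D j k‖ := by
      rw [Matrix.mul_apply]
      refine (norm_sum_le _ _).trans (le_of_eq ?_)
      refine Finset.sum_congr rfl fun k _ => ?_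
      rw [norm_mul, Matrix.conjTranspose_apply, norm_star]
    calc ‖(C * Dᴴ) i j‖ ^ 2 ≤ (∑ k, ‖C i k‖ * ‖D j k‖) ^ 2 := by
          exact pow_le_pow_left₀ (norm_nonneg _) h1 2
      _ ≤ (∑ k, ‖C i k‖ ^ 2) * (∑ k, ‖D j k‖ ^ 2) :=
          Finset.sum_mul_sq_le_sq_mul_sq _ _ _
  calc (∑ i, ∑ j, ‖(C * Dᴴ) i j‖ ^ 2)
      ≤ ∑ i, ∑ j, (∑ k, ‖C i k‖ ^ 2) * (∑ k, ‖D j k‖ ^ 2) := by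
        refine Finset.sum_le_sum fun i _ => Finset.sum_le_sum fun j _ => hb i j
    _ = (∑ i, ∑ k, ‖C i k‖ ^ 2) * (∑ j, ∑ k, ‖D j k‖ ^ 2) := by
        rw [Finset.sum_mul]
        exact Finset.sum_congr rfl fun i _ => (Finset.mul_sum _ _ _).symm
    _ = 1 := by
        rw [Finset.sum_comm] at hC hD
        rw [hC, hD, one_mul]

lemma trace_mul_apply' {n : Type*} [Fintype n] (A B : Matrix n n ℂ) :
    (A * B).trace = ∑ x, ∑ y, A x y * B y x := by
  simp [Matrix.trace, Matrix.mul_apply, Matrix.diag]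

lemma sum_prod_fn {ι : Type*} [Fintype ι] [DecidableEq ι] {d : ℕ} (F : ι → Fin d → ℂ) :
    ∑ a : ι → Fin d, ∏ k, F k (a k) = ∏ k, ∑ x, F k x := by
  rw [← Fintype.piFinset_univ, Finset.sum_prod_piFinset]

lemma sum_sum_prod {ι : Type*} [Fintype ι] [DecidableEq ι] {d : ℕ}
    (f : ι → Fin d → Fin d → ℂ) :
    ∑ a : ι → Fin d, ∑ b : ι → Fin d, ∏ k, f k (a k) (b k) = ∏ k, ∑ x, ∑ y, f k x y := by
  calc ∑ a : ι → Fin d, ∑ b : ι → Fin d, ∏ k, f k (a k) (b k)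
      = ∑ a : ι → Fin d, ∏ k, ∑ y, f k (a k) y :=
        Finset.sum_congr rfl fun a _ => sum_prod_fn fun k y => f k (a k) y
    _ = ∏ k, ∑ x, ∑ y, f k x y := sum_prod_fn fun k x => ∑ y, f k x y

lemma prod_split {N : ℕ} (j : Fin N) (F : Fin N → ℂ) :
    ∏ k, F k = F j * ∏ k : {i : Fin N // i ≠ j}, F k.1 := by
  rw [Fintype.prod_eq_mul_prod_compl j]
  congr 1
  exact Finset.prod_subtype _ (by simp) _

lemma sum4_swap {α β γ δ : Type*} [Fintype α] [Fintype β] [Fintype γ] [Fintype δ]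
    (f : α → β → γ → δ → ℂ) :
    ∑ a : α, ∑ b : β, ∑ i : γ, ∑ i' : δ, f a b i i'
      = ∑ i : γ, ∑ i' : δ, ∑ a : α, ∑ b : β, f a b i i' := by
  calc ∑ a : α, ∑ b : β, ∑ i : γ, ∑ i' : δ, f a b i i'
      = ∑ a : α, ∑ i : γ, ∑ b : β, ∑ i' : δ, f a b i i' :=
        Finset.sum_congr rfl fun a _ => Finset.sum_comm
    _ = ∑ a : α, ∑ i : γ, ∑ i' : δ, ∑ b : β, f a b i i' :=
        Finset.sum_congr rfl fun a _ => Finset.sum_congr rfl fun i _ => Finset.sum_comm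
    _ = ∑ i : γ, ∑ a : α, ∑ i' : δ, ∑ b : β, f a b i i' := Finset.sum_comm
    _ = ∑ i : γ, ∑ i' : δ, ∑ a : α, ∑ b : β, f a b i i' :=
        Finset.sum_congr rfl fun i _ => Finset.sum_comm

end PurityAux

set_option maxHeartbeats 2000000 in
open PurityAux Matrix in
/-- If `ρ` is a fully separable density matrix, then for every subsystem `j` the purity of
the whole is dominated by the purity of the one-qudit reduced density matrix. -/
theorem purity_le_reduced_purity_of_fullySeparable
    (N d : ℕ) (ρ : Matrix (Fin N → Fin d) (Fin N → Fin d) ℂ)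
    (hpsd : ρ.PosSemidef) (htr : ρ.trace = 1) (hsep : FullySeparable ρ) :
    ∀ j : Fin N, (ρ * ρ).trace ≤ (reduced ρ j * reduced ρ j).trace := by
  intro j
  obtain ⟨m, p, σ, hp, hps, hσ, hρ⟩ := hsep
  choose T hT using fun i i' k => trace_mul_key (hσ i k).1 (hσ i' k).1 (hσ i k).2 (hσ i' k).2
  -- purity of the whole state
  have hA : (ρ * ρ).trace = ∑ i, ∑ i', ((p i * p i' * ∏ k, T i i' k : ℝ) : ℂ) := by
    rw [trace_mul_apply']
    calc ∑ a : Fin N → Fin d, ∑ b : Fin N → Fin d, ρ a b * ρ b a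
        = ∑ a : Fin N → Fin d, ∑ b : Fin N → Fin d, ∑ i : Fin m, ∑ i' : Fin m,
            ((p i : ℂ) * ∏ k, σ i k (a k) (b k)) * ((p i' : ℂ) * ∏ k, σ i' k (b k) (a k)) := by
          refine Finset.sum_congr rfl fun a _ => Finset.sum_congr rfl fun b _ => ?_
          rw [hρ a b, hρ b a, Finset.sum_mul_sum]
      _ = ∑ i : Fin m, ∑ i' : Fin m, ∑ a : Fin N → Fin d, ∑ b : Fin N → Fin d,
            ((p i : ℂ) * ∏ k, σ i k (a k) (b k)) * ((p i' : ℂ) * ∏ k, σ i' k (b k) (a k)) :=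
        by rw [sum4_swap]
      _ = ∑ i, ∑ i', ((p i * p i' * ∏ k, T i i' k : ℝ) : ℂ) := by
          refine Finset.sum_congr rfl fun i _ => Finset.sum_congr rfl fun i' _ => ?_
          calc ∑ a : Fin N → Fin d, ∑ b : Fin N → Fin d, ((p i : ℂ) * ∏ k, σ i k (a k) (b k)) *
                  ((p i' : ℂ) * ∏ k, σ i' k (b k) (a k))
              = (p i : ℂ) * (p i' : ℂ) *
                  ∑ a : Fin N → Fin d, ∑ b : Fin N → Fin d, ∏ k, σ i k (a k) (b k) * σ i' k (b k) (a k) := by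
                rw [Finset.mul_sum]
                refine Finset.sum_congr rfl fun a _ => ?_
                rw [Finset.mul_sum]
                refine Finset.sum_congr rfl fun b _ => ?_
                rw [Finset.prod_mul_distrib]
                ring
            _ = (p i : ℂ) * (p i' : ℂ) * ∏ k, ∑ x, ∑ y, σ i k x y * σ i' k y x := by
                rw [sum_sum_prod fun k x y => σ i k x y * σ i' k y x]
            _ = (p i : ℂ) * (p i' : ℂ) * ∏ k, ((T i i' k : ℝ) : ℂ) := by
                congr 1
                refine Finset.prod_congr rfl fun k _ => ?_
                rw [← trace_mul_apply', (hT i i' k).2.2]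
            _ = ((p i * p i' * ∏ k, T i i' k : ℝ) : ℂ) := by push_cast; ring
  -- the reduced density matrix
  have hred : ∀ x y, reduced ρ j x y = ∑ i, (p i : ℂ) * σ i j x y := by
    intro x y
    show (∑ g : {i : Fin N // i ≠ j} → Fin d, ρ (insertAt j x g) (insertAt j y g)) = _
    calc ∑ g : {i : Fin N // i ≠ j} → Fin d, ρ (insertAt j x g) (insertAt j y g)
        = ∑ g : {i : Fin N // i ≠ j} → Fin d, ∑ i,
            (p i : ℂ) * ∏ k, σ i k (insertAt j x g k) (insertAt j y g k) :=
          Finset.sum_congr rfl fun g _ => hρ _ _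
      _ = ∑ i, ∑ g : {i : Fin N // i ≠ j} → Fin d,
            (p i : ℂ) * ∏ k, σ i k (insertAt j x g k) (insertAt j y g k) := Finset.sum_comm
      _ = ∑ i, (p i : ℂ) * σ i j x y := by
          refine Finset.sum_congr rfl fun i _ => ?_
          rw [← Finset.mul_sum]
          congr 1
          have hins : ∀ (g : {i : Fin N // i ≠ j} → Fin d),
              (∏ k, σ i k (insertAt j x g k) (insertAt j y g k))
                = σ i j x y * ∏ k : {i : Fin N // i ≠ j}, σ i k.1 (g k) (g k) := by
            intro g
            rw [prod_split j]
            congr 1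
            · simp [insertAt]
            · refine Finset.prod_congr rfl fun k _ => ?_
              have h1 : insertAt j x g k.1 = g k := by
                simp only [insertAt, dif_neg k.2]
              have h2 : insertAt j y g k.1 = g k := by
                simp only [insertAt, dif_neg k.2]
              rw [h1, h2]
          calc ∑ g : {i : Fin N // i ≠ j} → Fin d,
                ∏ k, σ i k (insertAt j x g k) (insertAt j y g k)
              = ∑ g : {i : Fin N // i ≠ j} → Fin d,
                  σ i j x y * ∏ k : {i : Fin N // i ≠ j}, σ i k.1 (g k) (g k) :=
                Finset.sum_congr rfl fun g _ => hins g
            _ = σ i j x y * ∑ g : {i : Fin N // i ≠ j} → Fin d,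
                  ∏ k : {i : Fin N // i ≠ j}, σ i k.1 (g k) (g k) := by
                rw [Finset.mul_sum]
            _ = σ i j x y := by
                rw [sum_prod_fn fun (k : {i : Fin N // i ≠ j}) v => σ i k.1 v v]
                have : ∀ k : {i : Fin N // i ≠ j}, (∑ v, σ i k.1 v v) = 1 := by
                  intro k
                  exact (hσ i k.1).2
                rw [Finset.prod_congr rfl fun k _ => this k, Finset.prod_const_one, mul_one]
  -- purity of the reduced state
  have hB : (reduced ρ j * reduced ρ j).trace = ∑ i, ∑ i', ((p i * p i' * T i i' j : ℝ) : ℂ) := by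
    rw [trace_mul_apply']
    calc ∑ x : Fin d, ∑ y : Fin d, reduced ρ j x y * reduced ρ j y x
        = ∑ x : Fin d, ∑ y : Fin d, ∑ i : Fin m, ∑ i' : Fin m,
            ((p i : ℂ) * σ i j x y) * ((p i' : ℂ) * σ i' j y x) := by
          refine Finset.sum_congr rfl fun x _ => Finset.sum_congr rfl fun y _ => ?_
          rw [hred x y, hred y x, Finset.sum_mul_sum]
      _ = ∑ i : Fin m, ∑ i' : Fin m, ∑ x : Fin d, ∑ y : Fin d,
            ((p i : ℂ) * σ i j x y) * ((p i' : ℂ) * σ i' j y x) :=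
        by rw [sum4_swap]
      _ = ∑ i, ∑ i', ((p i * p i' * T i i' j : ℝ) : ℂ) := by
          refine Finset.sum_congr rfl fun i _ => Finset.sum_congr rfl fun i' _ => ?_
          calc ∑ x, ∑ y, ((p i : ℂ) * σ i j x y) * ((p i' : ℂ) * σ i' j y x)
              = (p i : ℂ) * (p i' : ℂ) * ∑ x, ∑ y, σ i j x y * σ i' j y x := by
                rw [Finset.mul_sum]
                refine Finset.sum_congr rfl fun x _ => ?_
                rw [Finset.mul_sum]
                refine Finset.sum_congr rfl fun y _ => ?_
                ring
            _ = ((p i * p i' * T i i' j : ℝ) : ℂ) := by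
                rw [← trace_mul_apply', (hT i i' j).2.2]
                push_cast; ring
  rw [hA, hB]
  simp only [← Complex.ofReal_sum]
  rw [Complex.real_le_real]
  refine Finset.sum_le_sum fun i _ => Finset.sum_le_sum fun i' _ => ?_
  refine mul_le_mul_of_nonneg_left ?_ (mul_nonneg (hp i) (hp i'))
  calc ∏ k, T i i' k = T i i' j * ∏ k ∈ {j}ᶜ, T i i' k :=
        Fintype.prod_eq_mul_prod_compl j _
    _ ≤ T i i' j * 1 := by
        refine mul_le_mul_of_nonneg_left ?_ (hT i i' j).1
        exact Finset.prod_le_one (fun k _ => (hT i i' k).1) (fun k _ => (hT i i' k).2.1)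
    _ = T i i' j := mul_one _
end
end

section
/- Let ρ be an N-partite d-level density matrix (positive semidefinite matrix indexed by (Fin N → Fin d) with trace 1). If there exists a subsystem j : Fin N such that tr (ρ_j)² < tr ρ², then ρ is not fully separable (i.e. ρ is entangled). -/
open scoped ComplexOrder

noncomputable section

open scoped Matrix in
/-- The trace of `Mᴴ * M` is the (real, nonnegative) sum of the squared norms of entries. -/
lemma trace_conjTranspose_mul_aux (d : ℕ) (M : Matrix (Fin d) (Fin d) ℂ) :
    (Mᴴ * M).trace = ((∑ i, ∑ k, Complex.normSq (M k i) : ℝ) : ℂ) := by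
  simp only [Matrix.trace, Matrix.diag_apply, Matrix.mul_apply, Matrix.conjTranspose_apply]
  push_cast
  refine Finset.sum_congr rfl fun i _ => Finset.sum_congr rfl fun k _ => ?_
  rw [Complex.normSq_eq_conj_mul_self]
  rfl

open scoped MatrixOrder in
lemma posSemidef_eq_aux {d : ℕ} {A : Matrix (Fin d) (Fin d) ℂ} (hA : A.PosSemidef) :
    ∃ B : Matrix (Fin d) (Fin d) ℂ, A = B.conjTranspose * B := by
  have h0 : 0 ≤ A := Matrix.nonneg_iff_posSemidef.mpr hA
  refine ⟨CFC.sqrt A, ?_⟩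
  have hs : (CFC.sqrt A).conjTranspose = CFC.sqrt A := (CFC.sqrt_nonneg A).isSelfAdjoint
  rw [hs, CFC.sqrt_mul_sqrt_self A h0]

open scoped Matrix in
/-- For two positive semidefinite matrices of trace one, the trace of their product is a
real number between `0` and `1`. -/
lemma trace_mul_mem_unit_aux (d : ℕ) (A B : Matrix (Fin d) (Fin d) ℂ)
    (hA : A.PosSemidef) (hB : B.PosSemidef) (hA1 : A.trace = 1) (hB1 : B.trace = 1) :
    ∃ r : ℝ, 0 ≤ r ∧ r ≤ 1 ∧ (A * B).trace = (r : ℂ) := by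
  obtain ⟨M, rfl⟩ := posSemidef_eq_aux hA
  obtain ⟨P, rfl⟩ := posSemidef_eq_aux hB
  set C : Matrix (Fin d) (Fin d) ℂ := M * Pᴴ with hC
  have hM : ∑ i, ∑ k, Complex.normSq (M k i) = 1 := by
    have := (trace_conjTranspose_mul_aux d M).symm.trans hA1
    exact_mod_cast this
  have hP : ∑ i, ∑ k, Complex.normSq (P k i) = 1 := by
    have := (trace_conjTranspose_mul_aux d P).symm.trans hB1
    exact_mod_cast this
  refine ⟨∑ k, ∑ l, Complex.normSq (C k l),
    Finset.sum_nonneg fun _ _ => Finset.sum_nonneg fun _ _ => Complex.normSq_nonneg _, ?_, ?_⟩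
  · -- upper bound via Cauchy-Schwarz
    have hterm : ∀ k l, Complex.normSq (C k l) ≤
        (∑ j, Complex.normSq (M k j)) * (∑ j, Complex.normSq (P l j)) := by
      intro k l
      have hCkl : C k l = ∑ j, M k j * (starRingEnd ℂ) (P l j) := by
        simp [hC, Matrix.mul_apply, Matrix.conjTranspose_apply, Complex.star_def]
      have h1 : ‖C k l‖ ≤ ∑ j, ‖M k j‖ * ‖P l j‖ := by
        rw [hCkl]
        calc ‖∑ j, M k j * (starRingEnd ℂ) (P l j)‖
            ≤ ∑ j, ‖M k j * (starRingEnd ℂ) (P l j)‖ := by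
              simpa using norm_sum_le Finset.univ fun j => M k j * (starRingEnd ℂ) (P l j)
          _ = ∑ j, ‖M k j‖ * ‖P l j‖ := by
              simp [map_mul]
      calc Complex.normSq (C k l) = ‖C k l‖ ^ 2 := (Complex.sq_norm _).symm
        _ ≤ (∑ j, ‖M k j‖ * ‖P l j‖) ^ 2 :=
            pow_le_pow_left₀ (norm_nonneg _) h1 2
        _ ≤ (∑ j, ‖M k j‖ ^ 2) * (∑ j, ‖P l j‖ ^ 2) :=
            Finset.sum_mul_sq_le_sq_mul_sq _ _ _
        _ = (∑ j, Complex.normSq (M k j)) * (∑ j, Complex.normSq (P l j)) := by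
            simp [Complex.sq_norm]
    calc (∑ k, ∑ l, Complex.normSq (C k l))
        ≤ ∑ k, ∑ l, (∑ j, Complex.normSq (M k j)) * (∑ j, Complex.normSq (P l j)) :=
          Finset.sum_le_sum fun k _ => Finset.sum_le_sum fun l _ => hterm k l
      _ = (∑ k, ∑ j, Complex.normSq (M k j)) * (∑ l, ∑ j, Complex.normSq (P l j)) := by
          rw [← Finset.sum_mul_sum]
      _ = 1 := by
          rw [Finset.sum_comm] at hM hP
          rw [hM, hP, mul_one]
  · -- trace identity
    have hassoc : Mᴴ * M * (Pᴴ * P) = Mᴴ * (M * Pᴴ * P) := by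
      simp only [Matrix.mul_assoc]
    rw [hassoc, Matrix.trace_mul_comm, Matrix.mul_assoc]
    rw [show M * Pᴴ * (P * Mᴴ) = C * Cᴴ from by
      rw [hC, Matrix.conjTranspose_mul, Matrix.conjTranspose_conjTranspose]]
    simp only [Matrix.trace, Matrix.diag_apply, Matrix.mul_apply, Matrix.conjTranspose_apply]
    push_cast
    refine Finset.sum_congr rfl fun i _ => Finset.sum_congr rfl fun jj _ => ?_
    rw [Complex.normSq_eq_conj_mul_self]
    ring_nf
    rfl

/-- Fubini for sums of products over function types. -/
lemma sum_prod_eq_aux {ι : Type*} [Fintype ι] [DecidableEq ι] {κ : Type*} [Fintype κ]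
    (f : ι → κ → ℂ) : ∑ g : ι → κ, ∏ k, f k (g k) = ∏ k, ∑ x, f k x := by
  rw [Finset.prod_univ_sum, Fintype.piFinset_univ]

/-- Splitting off the `j`-th factor of a product over `Fin N`. -/
lemma prod_split_aux {N : ℕ} (j : Fin N) (f : Fin N → ℂ) :
    ∏ k, f k = f j * ∏ k : {k : Fin N // k ≠ j}, f k.1 := by
  rw [← Finset.prod_subtype (Finset.univ \ {j}) (fun k => by simp) (fun k => f k)]
  exact Finset.prod_eq_mul_prod_sdiff_singleton_of_mem (Finset.mem_univ j) f

/-- Trace of the product of two sums of scaled matrices. -/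
lemma trace_sum_mul_sum_aux {n : Type*} [Fintype n] [DecidableEq n] (m : ℕ) (p : Fin m → ℝ)
    (A : Fin m → Matrix n n ℂ) :
    ((∑ i, (p i : ℂ) • A i) * (∑ i, (p i : ℂ) • A i)).trace
      = ∑ i, ∑ i', ((p i : ℂ) * p i') * (A i * A i').trace := by
  rw [Finset.sum_mul_sum]
  simp only [Matrix.smul_mul, Matrix.mul_smul, Matrix.trace_sum, Matrix.trace_smul,
    smul_eq_mul]
  exact Finset.sum_congr rfl fun i _ => Finset.sum_congr rfl fun i' _ => by ring

/-- If some one-qudit reduced density matrix of `ρ` has purity strictly smaller than the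
purity of `ρ`, then `ρ` is entangled, i.e. not fully separable. -/
theorem entangled_of_reduced_purity_lt_purity
    (N d : ℕ) (ρ : Matrix (Fin N → Fin d) (Fin N → Fin d) ℂ)
    (hpsd : ρ.PosSemidef) (htr : ρ.trace = 1)
    (hlt : ∃ j : Fin N, (reduced ρ j * reduced ρ j).trace < (ρ * ρ).trace) :
    ¬ FullySeparable ρ := by
  rintro ⟨m, p, σ, hp0, hp1, hσ, hρ⟩
  obtain ⟨j, hj⟩ := hlt
  choose r hr0 hr1 hrt using fun i i' k =>
    trace_mul_mem_unit_aux d (σ i k) (σ i' k) (hσ i k).1 (hσ i' k).1 (hσ i k).2 (hσ i' k).2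
  -- the reduced state is the corresponding mixture of the `j`-th factors
  have hred : reduced ρ j = ∑ i, (p i : ℂ) • σ i j := by
    ext x y
    simp only [reduced, Matrix.of_apply, Matrix.sum_apply, Matrix.smul_apply, smul_eq_mul]
    calc (∑ g : {i : Fin N // i ≠ j} → Fin d, ρ (insertAt j x g) (insertAt j y g))
        = ∑ g : {i : Fin N // i ≠ j} → Fin d, ∑ i, (p i : ℂ) *
            (σ i j x y * ∏ k : {k : Fin N // k ≠ j}, σ i k.1 (g k) (g k)) := by
          refine Finset.sum_congr rfl fun g _ => ?_
          rw [hρ]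
          refine Finset.sum_congr rfl fun i _ => ?_
          congr 1
          rw [prod_split_aux j]
          congr 1
          · simp [insertAt]
          · refine Finset.prod_congr rfl fun k _ => ?_
            simp [insertAt, k.2]
      _ = ∑ i, (p i : ℂ) * σ i j x y := by
          rw [Finset.sum_comm]
          refine Finset.sum_congr rfl fun i _ => ?_
          have hsum : ∑ g : {i : Fin N // i ≠ j} → Fin d,
              ∏ k : {k : Fin N // k ≠ j}, σ i k.1 (g k) (g k)
              = ∏ k : {k : Fin N // k ≠ j}, (σ i k.1).trace :=
            sum_prod_eq_aux fun (k : {k : Fin N // k ≠ j}) (v : Fin d) => σ i k.1 v v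
          simp only [← Finset.mul_sum, ← Finset.sum_mul, hsum]
          simp [fun k : {k : Fin N // k ≠ j} => (hσ i k.1).2, mul_assoc]
  -- the state itself is the corresponding mixture of product states
  set T : Fin m → Matrix (Fin N → Fin d) (Fin N → Fin d) ℂ :=
    fun i => Matrix.of fun a b => ∏ k, σ i k (a k) (b k) with hT
  have hρT : ρ = ∑ i, (p i : ℂ) • T i := by
    ext a b
    simp [hρ, hT, Matrix.sum_apply]
  have hTT : ∀ i i', (T i * T i').trace = ((∏ k, r i i' k : ℝ) : ℂ) := by
    intro i i'
    have e1 : (T i * T i').trace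
        = ∑ a : Fin N → Fin d, ∑ b : Fin N → Fin d,
            (∏ k, σ i k (a k) (b k)) * ∏ k, σ i' k (b k) (a k) := by
      simp [Matrix.trace, Matrix.mul_apply, hT]
    rw [e1]
    have e2 : ∀ a b : Fin N → Fin d, (∏ k, σ i k (a k) (b k)) * ∏ k, σ i' k (b k) (a k)
        = ∏ k, (σ i k (a k) (b k) * σ i' k (b k) (a k)) :=
      fun a b => Finset.prod_mul_distrib.symm
    simp only [e2]
    have e3 : ∀ a : Fin N → Fin d,
        ∑ b : Fin N → Fin d, ∏ k, (σ i k (a k) (b k) * σ i' k (b k) (a k))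
          = ∏ k, ∑ y, σ i k (a k) y * σ i' k y (a k) :=
      fun a => sum_prod_eq_aux fun k y => σ i k (a k) y * σ i' k y (a k)
    simp only [e3]
    rw [sum_prod_eq_aux fun k x => ∑ y, σ i k x y * σ i' k y x]
    push_cast
    refine Finset.prod_congr rfl fun k _ => ?_
    rw [← hrt i i' k]
    simp [Matrix.trace, Matrix.mul_apply]
  -- compute both purities
  have hRR : (reduced ρ j * reduced ρ j).trace
      = ((∑ i, ∑ i', p i * p i' * r i i' j : ℝ) : ℂ) := by
    rw [hred, trace_sum_mul_sum_aux]
    push_cast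
    exact Finset.sum_congr rfl fun i _ => Finset.sum_congr rfl fun i' _ => by
      rw [hrt]
  have hPP : (ρ * ρ).trace
      = ((∑ i, ∑ i', p i * p i' * ∏ k, r i i' k : ℝ) : ℂ) := by
    rw [hρT, trace_sum_mul_sum_aux]
    push_cast
    exact Finset.sum_congr rfl fun i _ => Finset.sum_congr rfl fun i' _ => by
      rw [hTT]; push_cast; ring
  rw [hRR, hPP, Complex.real_lt_real] at hj
  -- but the purity of the reduced state dominates
  have hle : (∑ i, ∑ i', p i * p i' * ∏ k, r i i' k) ≤ ∑ i, ∑ i', p i * p i' * r i i' j := by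
    refine Finset.sum_le_sum fun i _ => Finset.sum_le_sum fun i' _ => ?_
    refine mul_le_mul_of_nonneg_left ?_ (mul_nonneg (hp0 i) (hp0 i'))
    rw [← Finset.mul_prod_erase Finset.univ _ (Finset.mem_univ j)]
    calc r i i' j * ∏ k ∈ Finset.univ.erase j, r i i' k
        ≤ r i i' j * 1 := by
          refine mul_le_mul_of_nonneg_left ?_ (hr0 i i' j)
          exact Finset.prod_le_one (fun k _ => hr0 i i' k) (fun k _ => hr1 i i' k)
      _ = r i i' j := mul_one _
  exact absurd hj (not_lt.mpr hle)
end
end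

section
/- Let ρ be a bipartite density matrix on ℂ^{d₁} ⊗ ℂ^{d₂}, i.e. a positive semidefinite matrix indexed by Fin d₁ × Fin d₂ with trace 1, and suppose ρ is separable: ρ = ∑_i p_i (A_i ⊗ B_i) (Kronecker product) with p_i ≥ 0, ∑_i p_i = 1, and A_i, B_i density matrices of sizes d₁ and d₂. Then tr ρ² ≤ tr (ρ_A)² and tr ρ² ≤ tr (ρ_B)², where ρ_A and ρ_B are the two partial traces of ρ. -/
open scoped ComplexOrder Kronecker
open Matrix Finset

noncomputable section

/-- Squared Frobenius norm. -/
def fro {m n : Type*} [Fintype m] [Fintype n] (M : Matrix m n ℂ) : ℝ :=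
  ∑ a, ∑ b, Complex.normSq (M a b)

lemma fro_nonneg {m n : Type*} [Fintype m] [Fintype n] (M : Matrix m n ℂ) : 0 ≤ fro M :=
  Finset.sum_nonneg fun _ _ => Finset.sum_nonneg fun _ _ => Complex.normSq_nonneg _

lemma trace_conjTranspose_mul {m n : Type*} [Fintype m] [Fintype n]
    (M : Matrix m n ℂ) : (Mᴴ * M).trace = (fro M : ℂ) := by
  simp only [Matrix.trace, Matrix.diag, Matrix.mul_apply, Matrix.conjTranspose_apply, fro]
  push_cast
  rw [Finset.sum_comm]
  congr 1; ext a; congr 1; ext b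
  rw [Complex.normSq_eq_conj_mul_self]; rfl

lemma fro_conjTranspose {m n : Type*} [Fintype m] [Fintype n] (M : Matrix m n ℂ) :
    fro Mᴴ = fro M := by
  rw [fro, fro, Finset.sum_comm]
  simp [Matrix.conjTranspose_apply, Complex.normSq_conj]

lemma fro_mul_le {m n p : Type*} [Fintype m] [Fintype n] [Fintype p]
    (A : Matrix m n ℂ) (B : Matrix n p ℂ) : fro (A * B) ≤ fro A * fro B := by
  have key : ∀ (a : m) (c : p), Complex.normSq ((A * B) a c) ≤
      (∑ b, Complex.normSq (A a b)) * (∑ b, Complex.normSq (B b c)) := by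
    intro a c
    rw [Matrix.mul_apply]
    have h1 : ‖∑ b, A a b * B b c‖ ≤ ∑ b, ‖A a b‖ * ‖B b c‖ := by
      refine (norm_sum_le _ _).trans_eq ?_
      exact Finset.sum_congr rfl fun b _ => norm_mul _ _
    have h2 : (∑ b, ‖A a b‖ * ‖B b c‖) ^ 2 ≤
        (∑ b, ‖A a b‖ ^ 2) * ∑ b, ‖B b c‖ ^ 2 :=
      Finset.sum_mul_sq_le_sq_mul_sq _ _ _
    calc Complex.normSq (∑ b, A a b * B b c)
        = ‖∑ b, A a b * B b c‖ ^ 2 := (Complex.sq_norm _).symm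
      _ ≤ (∑ b, ‖A a b‖ * ‖B b c‖) ^ 2 := by
          apply pow_le_pow_left₀ (norm_nonneg _) h1
      _ ≤ (∑ b, ‖A a b‖ ^ 2) * ∑ b, ‖B b c‖ ^ 2 := h2
      _ = _ := by simp [Complex.sq_norm]
  calc fro (A * B) ≤ ∑ a, ∑ c, (∑ b, Complex.normSq (A a b)) * (∑ b, Complex.normSq (B b c)) := by
        refine Finset.sum_le_sum fun a _ => Finset.sum_le_sum fun c _ => key a c
    _ = fro A * fro B := by
        rw [fro, fro, Finset.sum_mul]
        refine Finset.sum_congr rfl fun a _ => ?_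
        rw [← Finset.mul_sum, Finset.sum_comm]

/-- Partial trace over the second factor. -/
def ptA {d₁ d₂ : ℕ} (ρ : Matrix (Fin d₁ × Fin d₂) (Fin d₁ × Fin d₂) ℂ) :
    Matrix (Fin d₁) (Fin d₁) ℂ :=
  Matrix.of fun x x' => ∑ y : Fin d₂, ρ (x, y) (x', y)

/-- Partial trace over the first factor. -/
def ptB {d₁ d₂ : ℕ} (ρ : Matrix (Fin d₁ × Fin d₂) (Fin d₁ × Fin d₂) ℂ) :
    Matrix (Fin d₂) (Fin d₂) ℂ :=
  Matrix.of fun y y' => ∑ x : Fin d₁, ρ (x, y) (x, y')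

lemma trace_mul_eq_fro {n : Type*} [Fintype n] (M N : Matrix n n ℂ) :
    ((Mᴴ * M) * (Nᴴ * N)).trace = (fro (N * Mᴴ) : ℂ) := by
  calc ((Mᴴ * M) * (Nᴴ * N)).trace = (Mᴴ * (M * (Nᴴ * N))).trace := by
        rw [Matrix.mul_assoc]
    _ = ((M * (Nᴴ * N)) * Mᴴ).trace := Matrix.trace_mul_comm _ _
    _ = ((N * Mᴴ)ᴴ * (N * Mᴴ)).trace := by
        rw [Matrix.conjTranspose_mul, Matrix.conjTranspose_conjTranspose]
        simp only [Matrix.mul_assoc]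
    _ = (fro (N * Mᴴ) : ℂ) := trace_conjTranspose_mul _

/-- If a bipartite density matrix is separable, then its purity is dominated by the purity of
each of its two partial traces. -/
theorem purity_le_partialTrace_purity_of_separable
    (d₁ d₂ : ℕ) (ρ : Matrix (Fin d₁ × Fin d₂) (Fin d₁ × Fin d₂) ℂ)
    (hpsd : ρ.PosSemidef) (htr : ρ.trace = 1)
    (hsep : ∃ (m : ℕ) (p : Fin m → ℝ)
      (A : Fin m → Matrix (Fin d₁) (Fin d₁) ℂ) (B : Fin m → Matrix (Fin d₂) (Fin d₂) ℂ),
      (∀ i, 0 ≤ p i) ∧ (∑ i, p i = 1) ∧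
      (∀ i, (A i).PosSemidef ∧ (A i).trace = 1) ∧
      (∀ i, (B i).PosSemidef ∧ (B i).trace = 1) ∧
      ρ = ∑ i, (p i : ℂ) • (A i ⊗ₖ B i)) :
    (ρ * ρ).trace ≤ (ptA ρ * ptA ρ).trace ∧ (ρ * ρ).trace ≤ (ptB ρ * ptB ρ).trace := by
  obtain ⟨m, p, A, B, hp, hps, hA, hB, hρ⟩ := hsep
  choose M hM using fun i => (show ∃ X : Matrix (Fin d₁) (Fin d₁) ℂ, A i = Xᴴ * X by
    classical
    open scoped MatrixOrder Matrix.Norms.L2Operator in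
    exact CStarAlgebra.nonneg_iff_eq_star_mul_self.mp (hA i).1.nonneg)
  choose N hN using fun i => (show ∃ X : Matrix (Fin d₂) (Fin d₂) ℂ, B i = Xᴴ * X by
    classical
    open scoped MatrixOrder Matrix.Norms.L2Operator in
    exact CStarAlgebra.nonneg_iff_eq_star_mul_self.mp (hB i).1.nonneg)
  set c : Fin m → Fin m → ℝ := fun i j => fro (M j * (M i)ᴴ) with hc
  set d : Fin m → Fin m → ℝ := fun i j => fro (N j * (N i)ᴴ) with hd
  have hAc : ∀ i j, (A i * A j).trace = (c i j : ℂ) := fun i j => by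
    rw [hM i, hM j]; exact trace_mul_eq_fro _ _
  have hBd : ∀ i j, (B i * B j).trace = (d i j : ℂ) := fun i j => by
    rw [hN i, hN j]; exact trace_mul_eq_fro _ _
  have hMf : ∀ i, fro (M i) = 1 := fun i => by
    have h := (hA i).2
    rw [hM i, trace_conjTranspose_mul] at h
    exact_mod_cast h
  have hNf : ∀ i, fro (N i) = 1 := fun i => by
    have h := (hB i).2
    rw [hN i, trace_conjTranspose_mul] at h
    exact_mod_cast h
  have hc0 : ∀ i j, 0 ≤ c i j := fun i j => fro_nonneg _
  have hd0 : ∀ i j, 0 ≤ d i j := fun i j => fro_nonneg _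
  have hc1 : ∀ i j, c i j ≤ 1 := fun i j => by
    calc c i j ≤ fro (M j) * fro ((M i)ᴴ) := fro_mul_le _ _
      _ = 1 := by rw [fro_conjTranspose, hMf, hMf, one_mul]
  have hd1 : ∀ i j, d i j ≤ 1 := fun i j => by
    calc d i j ≤ fro (N j) * fro ((N i)ᴴ) := fro_mul_le _ _
      _ = 1 := by rw [fro_conjTranspose, hNf, hNf, one_mul]
  have htrB : ∀ i, (∑ y, B i y y) = 1 := fun i => by
    have := (hB i).2; simpa [Matrix.trace, Matrix.diag] using this
  have htrA : ∀ i, (∑ x, A i x x) = 1 := fun i => by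
    have := (hA i).2; simpa [Matrix.trace, Matrix.diag] using this
  have hptA : ptA ρ = ∑ i, (p i : ℂ) • A i := by
    ext x x'
    simp only [ptA, Matrix.of_apply, hρ, Matrix.sum_apply, Matrix.smul_apply,
      Matrix.kroneckerMap_apply, smul_eq_mul]
    rw [Finset.sum_comm]
    refine Finset.sum_congr rfl fun i _ => ?_
    rw [← Finset.mul_sum, ← Finset.mul_sum, htrB i, mul_one]
  have hptB : ptB ρ = ∑ i, (p i : ℂ) • B i := by
    ext y y'
    simp only [ptB, Matrix.of_apply, hρ, Matrix.sum_apply, Matrix.smul_apply,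
      Matrix.kroneckerMap_apply, smul_eq_mul]
    rw [Finset.sum_comm]
    refine Finset.sum_congr rfl fun i _ => ?_
    rw [← Finset.mul_sum]
    congr 1
    rw [← Finset.sum_mul, htrA i, one_mul]
  have hρ2 : (ρ * ρ).trace = ((∑ i, ∑ j, p i * p j * (c i j * d i j) : ℝ) : ℂ) := by
    rw [hρ, Finset.sum_mul_sum]
    rw [Matrix.trace_sum]
    push_cast
    refine Finset.sum_congr rfl fun i _ => ?_
    rw [Matrix.trace_sum]
    refine Finset.sum_congr rfl fun j _ => ?_
    rw [smul_mul_smul_comm, Matrix.trace_smul, ← Matrix.mul_kronecker_mul,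
      Matrix.trace_kronecker, hAc, hBd]
    simp only [smul_eq_mul]
  have hptA2 : (ptA ρ * ptA ρ).trace = ((∑ i, ∑ j, p i * p j * c i j : ℝ) : ℂ) := by
    rw [hptA, Finset.sum_mul_sum, Matrix.trace_sum]
    push_cast
    refine Finset.sum_congr rfl fun i _ => ?_
    rw [Matrix.trace_sum]
    refine Finset.sum_congr rfl fun j _ => ?_
    rw [smul_mul_smul_comm, Matrix.trace_smul, hAc]
    simp only [smul_eq_mul]
  have hptB2 : (ptB ρ * ptB ρ).trace = ((∑ i, ∑ j, p i * p j * d i j : ℝ) : ℂ) := by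
    rw [hptB, Finset.sum_mul_sum, Matrix.trace_sum]
    push_cast
    refine Finset.sum_congr rfl fun i _ => ?_
    rw [Matrix.trace_sum]
    refine Finset.sum_congr rfl fun j _ => ?_
    rw [smul_mul_smul_comm, Matrix.trace_smul, hBd]
    simp only [smul_eq_mul]
  constructor
  · rw [hρ2, hptA2, Complex.real_le_real]
    refine Finset.sum_le_sum fun i _ => Finset.sum_le_sum fun j _ => ?_
    exact mul_le_mul_of_nonneg_left
      (mul_le_of_le_one_right (hc0 i j) (hd1 i j))
      (mul_nonneg (hp i) (hp j))
  · rw [hρ2, hptB2, Complex.real_le_real]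
    refine Finset.sum_le_sum fun i _ => Finset.sum_le_sum fun j _ => ?_
    refine mul_le_mul_of_nonneg_left ?_ (mul_nonneg (hp i) (hp j))
    rw [mul_comm]
    exact mul_le_of_le_one_right (hd0 i j) (hc1 i j)
end
end

section
/- (Theorem 1) Fix N ≥ 1 and d > M ≥ 2. Let Φ_1, …, Φ_M be unit vectors indexed by (Fin N → Fin d) such that for every k and every subsystem j : Fin N the one-qudit reduced density matrix of |Φ_k⟩⟨Φ_k| at site j equals (1/d)·I_d. Let λ_1, …, λ_M > 0 with ∑_k λ_k = 1. Then the mixed state ρ = ∑_k λ_k |Φ_k⟩⟨Φ_k| is entangled, i.e. ρ is not fully separable. -/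
open scoped ComplexOrder

noncomputable section

/-- The pure-state density matrix `|Φ⟩⟨Φ|`. -/
def pureMat {α : Type*} (Φ : α → ℂ) : Matrix α α ℂ :=
  Matrix.of fun a b => Φ a * (starRingEnd ℂ) (Φ b)

/-- Entrywise spectral decomposition of a positive semidefinite matrix, with
the additional fact that each eigenvector (column of the unitary) is nonzero. -/
lemma posSemidef_decomp {n : ℕ} {Amat : Matrix (Fin n) (Fin n) ℂ} (hA : Amat.PosSemidef) :
    ∃ (V : Matrix (Fin n) (Fin n) ℂ) (eg : Fin n → ℝ),
      (∀ s, 0 ≤ eg s) ∧ (∀ s, ∃ x, V x s ≠ 0) ∧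
      (∀ x y, Amat x y = ∑ s, (eg s : ℂ) * (V x s * (starRingEnd ℂ) (V y s))) := by
  refine ⟨(hA.1.eigenvectorUnitary : Matrix (Fin n) (Fin n) ℂ), hA.1.eigenvalues,
    fun s => hA.eigenvalues_nonneg s, ?_, ?_⟩
  · intro s
    by_contra h
    push_neg at h
    have hu : (star (hA.1.eigenvectorUnitary : Matrix (Fin n) (Fin n) ℂ)) *
        (hA.1.eigenvectorUnitary : Matrix (Fin n) (Fin n) ℂ) = 1 :=
      (Unitary.mem_iff.mp hA.1.eigenvectorUnitary.2).1
    have h1 : ((star (hA.1.eigenvectorUnitary : Matrix (Fin n) (Fin n) ℂ)) *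
        (hA.1.eigenvectorUnitary : Matrix (Fin n) (Fin n) ℂ)) s s = 1 := by
      rw [hu]; rw [Matrix.one_apply_eq]
    rw [Matrix.mul_apply] at h1
    rw [Finset.sum_eq_zero (fun x _ => by rw [h x, mul_zero])] at h1
    exact zero_ne_one h1
  · intro x y
    conv_lhs => rw [hA.1.spectral_theorem]
    rw [Unitary.conjStarAlgAut_apply]
    rw [Matrix.mul_apply]
    refine Finset.sum_congr rfl fun s _ => ?_
    rw [Matrix.mul_diagonal, Matrix.star_apply]
    simp only [Function.comp_apply]
    rw [show (RCLike.ofReal (hA.1.eigenvalues s) : ℂ) = ((hA.1.eigenvalues s : ℝ) : ℂ) from rfl]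
    simp only [RCLike.star_def]
    ring

/-- Over `ℂ`, one can find a single vector `z` that is non-orthogonal (w.r.t. the bilinear
pairing) to each member of a finite family of nonzero vectors. -/
lemma exists_separating_z {ι A : Type*} [Fintype ι] (S : Finset A) (w : A → ι → ℂ)
    (hw : ∀ α ∈ S, w α ≠ 0) :
    ∃ z : ι → ℂ, ∀ α ∈ S, (∑ g, z g * w α g) ≠ 0 := by
  classical
  induction S using Finset.induction with
  | empty => exact ⟨0, by simp⟩
  | @insert a S' ha ih =>
    obtain ⟨z, hz⟩ := ih (fun α h => hw α (Finset.mem_insert_of_mem h))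
    set y : ι → ℂ := fun g => (starRingEnd ℂ) (w a g) with hy_def
    have hya : (∑ g, y g * w a g) ≠ 0 := by
      have hval : (∑ g, y g * w a g) = ((∑ g, Complex.normSq (w a g) : ℝ) : ℂ) := by
        push_cast
        refine Finset.sum_congr rfl fun g _ => ?_
        rw [hy_def, mul_comm, Complex.mul_conj]
      rw [hval]
      intro h0
      have hs : (∑ g, Complex.normSq (w a g)) = 0 := by exact_mod_cast h0
      have hall := (Finset.sum_eq_zero_iff_of_nonneg
        (fun g _ => Complex.normSq_nonneg (w a g))).mp hs
      have : w a = 0 := funext fun g =>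
        Complex.normSq_eq_zero.mp (hall g (Finset.mem_univ g))
      exact hw a (Finset.mem_insert_self a S') this
    set bad : Finset ℂ :=
      (insert a S').image (fun β => -(∑ g, z g * w β g) / (∑ g, y g * w β g)) with hbad
    obtain ⟨c, hc⟩ := Infinite.exists_notMem_finset bad
    refine ⟨fun g => z g + c * y g, ?_⟩
    intro β hβ
    have hsum : (∑ g, (z g + c * y g) * w β g)
        = (∑ g, z g * w β g) + c * (∑ g, y g * w β g) := by
      rw [Finset.mul_sum, ← Finset.sum_add_distrib]
      exact Finset.sum_congr rfl fun g _ => by ring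
    rw [hsum]
    by_cases hyβ : (∑ g, y g * w β g) = 0
    · rw [hyβ, mul_zero, add_zero]
      rcases Finset.mem_insert.mp hβ with rfl | hβ'
      · exact absurd hyβ hya
      · exact hz β hβ'
    · intro h0
      apply hc
      rw [hbad]
      refine Finset.mem_image.mpr ⟨β, hβ, ?_⟩
      rw [div_eq_iff hyβ]
      linear_combination -h0

/-- Theorem 1 of the paper: for `d > M ≥ 2`, any mixture with strictly positive weights of
`M` entangled `N`-partite pure states, all of whose one-qudit reduced density matrices are
maximally mixed, is entangled (not fully separable). -/
theorem mixture_entangled_of_card_lt_dim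
    (N d M : ℕ) (hN : 1 ≤ N) (hM : 2 ≤ M) (hMd : M < d)
    (Φ : Fin M → (Fin N → Fin d) → ℂ)
    (hunit : ∀ k, ∑ a, ‖Φ k a‖ ^ 2 = 1)
    (hred : ∀ k, ∀ j : Fin N, reduced (pureMat (Φ k)) j = (d : ℂ)⁻¹ • 1)
    (lam : Fin M → ℝ) (h0 : ∀ k, 0 < lam k) (h1 : ∑ k, lam k = 1) :
    ¬ FullySeparable (∑ k, lam k • pureMat (Φ k)) := by
  classical
  rintro ⟨m, p, σ, hp0, hp1, hσ, hrep⟩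
  set ρ : Matrix (Fin N → Fin d) (Fin N → Fin d) ℂ := ∑ k, lam k • pureMat (Φ k) with hρdef
  have hNpos : 0 < N := hN
  set j : Fin N := ⟨0, hNpos⟩ with hj
  -- spectral decomposition of each σ i k
  choose V eg heg0 hcol hspec using fun (i : Fin m) (k : Fin N) => posSemidef_decomp (hσ i k).1
  -- the product pure family
  set e : (Fin m × (Fin N → Fin d)) → (Fin N → Fin d) → ℂ :=
    fun α a => ∏ k, V α.1 k (a k) (α.2 k) with he_def
  set t : (Fin m × (Fin N → Fin d)) → ℝ :=
    fun α => p α.1 * ∏ k, eg α.1 k (α.2 k) with ht_def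
  have ht0 : ∀ α, 0 ≤ t α :=
    fun α => mul_nonneg (hp0 _) (Finset.prod_nonneg fun k _ => heg0 _ _ _)
  -- ρ in terms of the product pure family
  have hρe : ∀ a b, ρ a b
      = ∑ α : Fin m × (Fin N → Fin d), (t α : ℂ) * (e α a * (starRingEnd ℂ) (e α b)) := by
    intro a b
    rw [hrep a b, Fintype.sum_prod_type]
    refine Finset.sum_congr rfl fun i _ => ?_
    calc (p i : ℂ) * ∏ k, σ i k (a k) (b k)
        = (p i : ℂ) * ∏ k, ∑ s : Fin d,
            (eg i k s : ℂ) * (V i k (a k) s * (starRingEnd ℂ) (V i k (b k) s)) := by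
          rw [Finset.prod_congr rfl fun k _ => hspec i k (a k) (b k)]
      _ = (p i : ℂ) * ∑ τ : Fin N → Fin d, ∏ k,
            (eg i k (τ k) : ℂ) * (V i k (a k) (τ k) * (starRingEnd ℂ) (V i k (b k) (τ k))) := by
          rw [Finset.prod_univ_sum, Fintype.piFinset_univ]
      _ = ∑ τ : Fin N → Fin d, (t (i, τ) : ℂ) * (e (i, τ) a * (starRingEnd ℂ) (e (i, τ) b)) := by
          rw [Finset.mul_sum]
          refine Finset.sum_congr rfl fun τ _ => ?_
          rw [Finset.prod_mul_distrib, Finset.prod_mul_distrib]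
          simp only [he_def, ht_def]
          push_cast
          rw [map_prod]
          ring
  -- ρ in terms of the Φ's
  have hρΦ : ∀ a b, ρ a b = ∑ k, (lam k : ℂ) * (Φ k a * (starRingEnd ℂ) (Φ k b)) := by
    intro a b
    rw [hρdef, Matrix.sum_apply]
    refine Finset.sum_congr rfl fun k _ => ?_
    rw [Matrix.smul_apply]
    simp [pureMat, Complex.real_smul]
  -- split the product pure vector at site j
  set u : (Fin m × (Fin N → Fin d)) → (Fin d → ℂ) :=
    fun α x => V α.1 j x (α.2 j) with hu_def
  set w : (Fin m × (Fin N → Fin d)) → ({i : Fin N // i ≠ j} → Fin d) → ℂ :=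
    fun α g => ∏ k : {i : Fin N // i ≠ j}, V α.1 k.1 (g k) (α.2 k.1) with hw_def
  have hsplit : ∀ α x g, e α (insertAt j x g) = u α x * w α g := by
    intro α x g
    simp only [he_def, hu_def, hw_def]
    rw [← Finset.mul_prod_erase Finset.univ _ (Finset.mem_univ j)]
    have h2 : insertAt j x g j = x := by simp [insertAt]
    rw [h2]
    congr 1
    rw [Finset.prod_subtype (Finset.univ.erase j) (p := fun i => i ≠ j)
      (fun k => by simp [Finset.mem_erase]) (fun k => V α.1 k (insertAt j x g k) (α.2 k))]
    refine Finset.prod_congr rfl fun k _ => ?_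
    have h3 : insertAt j x g k.1 = g k := by
      simp only [insertAt, dif_neg k.2]
    rw [h3]
  -- w α is nonzero
  have hwne : ∀ α, w α ≠ 0 := by
    intro α
    choose gx hgx using fun (k : {i : Fin N // i ≠ j}) => hcol α.1 k.1 (α.2 k.1)
    intro hzz
    have hz0 : w α gx = 0 := by rw [hzz]; rfl
    rw [hw_def] at hz0
    exact (Finset.prod_ne_zero_iff.mpr fun k _ => hgx k) hz0
  set nw : (Fin m × (Fin N → Fin d)) → ℝ :=
    fun α => ∑ g : {i : Fin N // i ≠ j} → Fin d, Complex.normSq (w α g) with hnw_def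
  -- the reduced density matrix computed from the Φ side
  have hredρ : ∀ x y, reduced ρ j x y = (d : ℂ)⁻¹ * (if x = y then 1 else 0) := by
    intro x y
    have e2 : ∀ k : Fin M, (∑ g : {i : Fin N // i ≠ j} → Fin d,
        (Φ k (insertAt j x g) * (starRingEnd ℂ) (Φ k (insertAt j y g))))
        = (d : ℂ)⁻¹ * (if x = y then 1 else 0) := by
      intro k
      have hh : reduced (pureMat (Φ k)) j x y
          = ((d : ℂ)⁻¹ • (1 : Matrix (Fin d) (Fin d) ℂ)) x y := by
        rw [hred k j]
      simpa [reduced, pureMat, Matrix.smul_apply, Matrix.one_apply, smul_eq_mul,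
        Matrix.of_apply] using hh
    calc reduced ρ j x y
        = ∑ g : {i : Fin N // i ≠ j} → Fin d, ρ (insertAt j x g) (insertAt j y g) := rfl
      _ = ∑ g : {i : Fin N // i ≠ j} → Fin d, ∑ k,
            (lam k : ℂ) * (Φ k (insertAt j x g) * (starRingEnd ℂ) (Φ k (insertAt j y g))) :=
          Finset.sum_congr rfl fun g _ => hρΦ _ _
      _ = ∑ k, ∑ g : {i : Fin N // i ≠ j} → Fin d,
            (lam k : ℂ) * (Φ k (insertAt j x g) * (starRingEnd ℂ) (Φ k (insertAt j y g))) :=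
          Finset.sum_comm
      _ = ∑ k, (lam k : ℂ) * ((d : ℂ)⁻¹ * (if x = y then 1 else 0)) := by
          refine Finset.sum_congr rfl fun k _ => ?_
          rw [← Finset.mul_sum, e2 k]
      _ = (d : ℂ)⁻¹ * (if x = y then 1 else 0) := by
          rw [← Finset.sum_mul]
          have : (∑ k, (lam k : ℂ)) = 1 := by
            rw [← Complex.ofReal_sum, h1, Complex.ofReal_one]
          rw [this, one_mul]
  -- the reduced density matrix computed from the separable side
  have hredα : ∀ x y, reduced ρ j x y
      = ∑ α : Fin m × (Fin N → Fin d),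
          ((t α * nw α : ℝ) : ℂ) * (u α x * (starRingEnd ℂ) (u α y)) := by
    intro x y
    calc reduced ρ j x y
        = ∑ g : {i : Fin N // i ≠ j} → Fin d, ρ (insertAt j x g) (insertAt j y g) := rfl
      _ = ∑ g : {i : Fin N // i ≠ j} → Fin d, ∑ α : Fin m × (Fin N → Fin d),
            (t α : ℂ) * (e α (insertAt j x g) * (starRingEnd ℂ) (e α (insertAt j y g))) :=
          Finset.sum_congr rfl fun g _ => hρe _ _
      _ = ∑ α : Fin m × (Fin N → Fin d), ∑ g : {i : Fin N // i ≠ j} → Fin d,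
            (t α : ℂ) * (e α (insertAt j x g) * (starRingEnd ℂ) (e α (insertAt j y g))) :=
          Finset.sum_comm
      _ = _ := by
          refine Finset.sum_congr rfl fun α _ => ?_
          have hterm : ∀ g, (t α : ℂ) *
                (e α (insertAt j x g) * (starRingEnd ℂ) (e α (insertAt j y g)))
              = ((Complex.normSq (w α g) : ℝ) : ℂ) *
                  ((t α : ℂ) * (u α x * (starRingEnd ℂ) (u α y))) := by
            intro g
            rw [hsplit α x g, hsplit α y g, map_mul]
            have hc : w α g * (starRingEnd ℂ) (w α g) = ((Complex.normSq (w α g) : ℝ) : ℂ) :=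
              Complex.mul_conj (w α g)
            calc (t α : ℂ) * (u α x * w α g * ((starRingEnd ℂ) (u α y) * (starRingEnd ℂ) (w α g)))
                = (w α g * (starRingEnd ℂ) (w α g)) *
                    ((t α : ℂ) * (u α x * (starRingEnd ℂ) (u α y))) := by ring
              _ = _ := by rw [hc]
          rw [Finset.sum_congr rfl fun g _ => hterm g, ← Finset.sum_mul]
          simp only [hnw_def]
          push_cast
          ring
  -- the key identity
  have key : ∀ x y, (∑ α : Fin m × (Fin N → Fin d),
      ((t α * nw α : ℝ) : ℂ) * (u α x * (starRingEnd ℂ) (u α y)))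
      = (d : ℂ)⁻¹ * (if x = y then 1 else 0) := by
    intro x y; rw [← hredα x y, hredρ x y]
  have hdne : (d : ℂ) ≠ 0 := Nat.cast_ne_zero.mpr (by omega)
  -- the u's of the support span everything
  have hspan : ∀ y, Pi.single y (1 : ℂ) ∈
      Submodule.span ℂ (u '' {α | t α ≠ 0}) := by
    intro y
    have hform : Pi.single y (1 : ℂ)
        = ∑ α : Fin m × (Fin N → Fin d),
            ((d : ℂ) * ((t α * nw α : ℝ) : ℂ) * (starRingEnd ℂ) (u α y)) • u α := by
      funext x
      rw [Finset.sum_apply]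
      simp only [Pi.smul_apply, smul_eq_mul]
      have hps : (Pi.single y (1 : ℂ) : Fin d → ℂ) x = if x = y then 1 else 0 := by
        simp [Pi.single_apply]
      rw [hps]
      calc (if x = y then (1 : ℂ) else 0)
          = (d : ℂ) * ((d : ℂ)⁻¹ * (if x = y then 1 else 0)) := by
            rw [← mul_assoc, mul_inv_cancel₀ hdne, one_mul]
        _ = (d : ℂ) * ∑ α : Fin m × (Fin N → Fin d),
              ((t α * nw α : ℝ) : ℂ) * (u α x * (starRingEnd ℂ) (u α y)) := by
            rw [key x y]
        _ = _ := by
            rw [Finset.mul_sum]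
            exact Finset.sum_congr rfl fun α _ => by ring
    rw [hform]
    refine Submodule.sum_mem _ fun α _ => ?_
    by_cases hα : t α = 0
    · have hcoef : ((t α * nw α : ℝ) : ℂ) = 0 := by rw [hα]; simp
      rw [hcoef]
      simp
    · exact Submodule.smul_mem _ _ (Submodule.subset_span ⟨α, hα, rfl⟩)
  -- embed into Euclidean space for the orthogonality argument
  set Ψ : Fin M → EuclideanSpace ℂ (Fin N → Fin d) :=
    fun k => (WithLp.equiv 2 ((Fin N → Fin d) → ℂ)).symm (Φ k) with hΨ_def
  set ebig : (Fin m × (Fin N → Fin d)) → EuclideanSpace ℂ (Fin N → Fin d) :=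
    fun α => (WithLp.equiv 2 ((Fin N → Fin d) → ℂ)).symm (e α) with hebig_def
  set W : Submodule ℂ (EuclideanSpace ℂ (Fin N → Fin d)) :=
    Submodule.span ℂ (Set.range Ψ) with hW_def
  -- the supported e's lie in the span of the Φ's
  have hmem : ∀ α, t α ≠ 0 → ebig α ∈ W := by
    intro α₀ hα₀
    rw [← Submodule.orthogonal_orthogonal W, Submodule.mem_orthogonal]
    intro v hv
    have hζ : ∀ k, (∑ a, (starRingEnd ℂ) (Φ k a) * v a) = 0 := by
      intro k
      have := hv (Ψ k) (Submodule.subset_span ⟨k, rfl⟩)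
      simpa [hΨ_def, PiLp.inner_apply, RCLike.inner_apply,
        mul_comm] using this
    set η : (Fin m × (Fin N → Fin d)) → ℂ :=
      fun α => ∑ a, (starRingEnd ℂ) (e α a) * v a with hη_def
    -- Q computed from the Φ side
    have hQΦ : (∑ b, ∑ a, (starRingEnd ℂ) (v b) * (ρ b a * v a)) = 0 := by
      have e1 : ∀ bb aa, (starRingEnd ℂ) (v bb) * (ρ bb aa * v aa)
          = ∑ k, (lam k : ℂ) *
              (((starRingEnd ℂ) (v bb) * Φ k bb) * ((starRingEnd ℂ) (Φ k aa) * v aa)) := by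
        intro bb aa
        rw [hρΦ bb aa, Finset.sum_mul, Finset.mul_sum]
        exact Finset.sum_congr rfl fun k _ => by ring
      calc (∑ b, ∑ a, (starRingEnd ℂ) (v b) * (ρ b a * v a))
          = ∑ b, ∑ a, ∑ k, (lam k : ℂ) *
              (((starRingEnd ℂ) (v b) * Φ k b) * ((starRingEnd ℂ) (Φ k a) * v a)) :=
            Finset.sum_congr rfl fun b _ => Finset.sum_congr rfl fun a _ => e1 b a
        _ = ∑ b, ∑ k, ∑ a, (lam k : ℂ) *
              (((starRingEnd ℂ) (v b) * Φ k b) * ((starRingEnd ℂ) (Φ k a) * v a)) :=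
            Finset.sum_congr rfl fun b _ => Finset.sum_comm
        _ = ∑ k, ∑ b, ∑ a, (lam k : ℂ) *
              (((starRingEnd ℂ) (v b) * Φ k b) * ((starRingEnd ℂ) (Φ k a) * v a)) :=
            Finset.sum_comm
        _ = 0 := by
            refine Finset.sum_eq_zero fun k _ => ?_
            have : ∀ b, ∑ a, (lam k : ℂ) *
                (((starRingEnd ℂ) (v b) * Φ k b) * ((starRingEnd ℂ) (Φ k a) * v a))
                = (lam k : ℂ) * ((starRingEnd ℂ) (v b) * Φ k b) *
                    (∑ a, (starRingEnd ℂ) (Φ k a) * v a) := by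
              intro b
              rw [Finset.mul_sum]
              refine Finset.sum_congr rfl fun a _ => by ring
            rw [Finset.sum_congr rfl fun b _ => this b]
            refine Finset.sum_eq_zero fun b _ => ?_
            rw [hζ k, mul_zero]
    -- Q computed from the separable side
    have hQe : (∑ b, ∑ a, (starRingEnd ℂ) (v b) * (ρ b a * v a))
        = ∑ α : Fin m × (Fin N → Fin d),
            ((t α * Complex.normSq (η α) : ℝ) : ℂ) := by
      have e1 : ∀ bb aa, (starRingEnd ℂ) (v bb) * (ρ bb aa * v aa)
          = ∑ α : Fin m × (Fin N → Fin d), (t α : ℂ) *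
              (((starRingEnd ℂ) (v bb) * e α bb) * ((starRingEnd ℂ) (e α aa) * v aa)) := by
        intro bb aa
        rw [hρe bb aa, Finset.sum_mul, Finset.mul_sum]
        exact Finset.sum_congr rfl fun α _ => by ring
      calc (∑ b, ∑ a, (starRingEnd ℂ) (v b) * (ρ b a * v a))
          = ∑ b, ∑ a, ∑ α : Fin m × (Fin N → Fin d), (t α : ℂ) *
              (((starRingEnd ℂ) (v b) * e α b) * ((starRingEnd ℂ) (e α a) * v a)) :=
            Finset.sum_congr rfl fun b _ => Finset.sum_congr rfl fun a _ => e1 b a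
        _ = ∑ b, ∑ α : Fin m × (Fin N → Fin d), ∑ a, (t α : ℂ) *
              (((starRingEnd ℂ) (v b) * e α b) * ((starRingEnd ℂ) (e α a) * v a)) :=
            Finset.sum_congr rfl fun b _ => Finset.sum_comm
        _ = ∑ α : Fin m × (Fin N → Fin d), ∑ b, ∑ a, (t α : ℂ) *
              (((starRingEnd ℂ) (v b) * e α b) * ((starRingEnd ℂ) (e α a) * v a)) :=
            Finset.sum_comm
        _ = _ := by
            refine Finset.sum_congr rfl fun α _ => ?_
            simp only [hη_def]
            set ξ : ℂ := ∑ a, (starRingEnd ℂ) (e α a) * v a with hξ_def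
            have hconjξ : (∑ b, (starRingEnd ℂ) (v b) * e α b) = (starRingEnd ℂ) ξ := by
              rw [hξ_def, map_sum]
              refine Finset.sum_congr rfl fun b _ => ?_
              rw [map_mul, Complex.conj_conj]
              ring
            calc ∑ b, ∑ a, (t α : ℂ) *
                  (((starRingEnd ℂ) (v b) * e α b) * ((starRingEnd ℂ) (e α a) * v a))
                = ∑ b, (t α : ℂ) * (((starRingEnd ℂ) (v b) * e α b) * ξ) := by
                  refine Finset.sum_congr rfl fun b _ => ?_
                  rw [hξ_def, Finset.mul_sum, Finset.mul_sum]
              _ = (∑ b, (starRingEnd ℂ) (v b) * e α b) * ((t α : ℂ) * ξ) := by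
                  rw [Finset.sum_mul]
                  refine Finset.sum_congr rfl fun b _ => by ring
              _ = ((starRingEnd ℂ) ξ * ξ) * (t α : ℂ) := by rw [hconjξ]; ring
              _ = ((t α * Complex.normSq ξ : ℝ) : ℂ) := by
                  rw [show (starRingEnd ℂ) ξ * ξ = ((Complex.normSq ξ : ℝ) : ℂ) by
                    rw [mul_comm, Complex.mul_conj]]
                  push_cast
                  ring
    -- conclude each η vanishes on the support
    have hreal : (∑ α : Fin m × (Fin N → Fin d), t α * Complex.normSq (η α)) = 0 := by
      have : ((∑ α : Fin m × (Fin N → Fin d), t α * Complex.normSq (η α) : ℝ) : ℂ) = 0 := by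
        rw [Complex.ofReal_sum, ← hQe, hQΦ]
      exact_mod_cast this
    have hterm := (Finset.sum_eq_zero_iff_of_nonneg
      (fun α _ => mul_nonneg (ht0 α) (Complex.normSq_nonneg (η α)))).mp hreal
    have hη0 : η α₀ = 0 := by
      have := hterm α₀ (Finset.mem_univ α₀)
      rcases mul_eq_zero.mp this with h | h
      · exact absurd h hα₀
      · exact Complex.normSq_eq_zero.mp h
    -- the inner product is the conjugate of η α₀
    have : (inner ℂ v (ebig α₀) : ℂ) = (starRingEnd ℂ) (η α₀) := by
      rw [hη_def]
      simp only [hebig_def, PiLp.inner_apply, RCLike.inner_apply,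
        WithLp.equiv_symm_apply, PiLp.toLp_apply]
      rw [map_sum]
      refine Finset.sum_congr rfl fun a _ => ?_
      rw [map_mul, Complex.conj_conj]
    rw [this, hη0, map_zero]
  -- the separating functional and the associated linear map
  obtain ⟨z, hz⟩ := exists_separating_z (Finset.univ.filter fun α => t α ≠ 0) w
    (fun α _ => hwne α)
  set T : EuclideanSpace ℂ (Fin N → Fin d) →ₗ[ℂ] (Fin d → ℂ) :=
    { toFun := fun v x => ∑ g : {i : Fin N // i ≠ j} → Fin d, z g * v (insertAt j x g)
      map_add' := by
        intro v v'
        funext x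
        simp only [PiLp.add_apply, Pi.add_apply, mul_add]
        rw [Finset.sum_add_distrib]
      map_smul' := by
        intro c v
        funext x
        simp only [PiLp.smul_apply, Pi.smul_apply, smul_eq_mul, RingHom.id_apply]
        rw [Finset.mul_sum]
        exact Finset.sum_congr rfl fun g _ => by ring } with hT_def
  have hTe : ∀ α, T (ebig α) = (∑ g, z g * w α g) • u α := by
    intro α
    funext x
    have : T (ebig α) x = ∑ g : {i : Fin N // i ≠ j} → Fin d, z g * e α (insertAt j x g) := rfl
    rw [this]
    simp only [Pi.smul_apply, smul_eq_mul]
    rw [Finset.sum_mul]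
    refine Finset.sum_congr rfl fun g _ => ?_
    rw [hsplit α x g]
    ring
  -- span of the u's is contained in the image of W
  have hsub : Submodule.span ℂ (u '' {α | t α ≠ 0}) ≤ W.map T := by
    rw [Submodule.span_le]
    rintro _ ⟨α, hα, rfl⟩
    have hfz : (∑ g, z g * w α g) ≠ 0 := hz α (Finset.mem_filter.mpr ⟨Finset.mem_univ α, hα⟩)
    have : u α = (∑ g, z g * w α g)⁻¹ • T (ebig α) := by
      rw [hTe α, smul_smul, inv_mul_cancel₀ hfz, one_smul]
    rw [this]
    exact Submodule.smul_mem _ _ (Submodule.mem_map_of_mem (hmem α hα))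
  have htop : (⊤ : Submodule ℂ (Fin d → ℂ)) ≤ Submodule.span ℂ (u '' {α | t α ≠ 0}) := by
    rw [← (Pi.basisFun ℂ (Fin d)).span_eq, Submodule.span_le]
    rintro _ ⟨y, rfl⟩
    rw [Pi.basisFun_apply]
    exact hspan y
  -- dimension count
  have hdM : d ≤ M := by
    have f1 : Module.finrank ℂ (Fin d → ℂ) = d := by
      rw [Module.finrank_fintype_fun_eq_card, Fintype.card_fin]
    have f2 : Module.finrank ℂ (W.map T) ≤ Module.finrank ℂ W := Submodule.finrank_map_le T W
    have f3 : Module.finrank ℂ W ≤ M := by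
      have := finrank_range_le_card (R := ℂ) Ψ
      simpa [Set.finrank, hW_def] using this
    have f4 : Module.finrank ℂ (⊤ : Submodule ℂ (Fin d → ℂ)) ≤ Module.finrank ℂ (W.map T) :=
      Submodule.finrank_mono (le_trans htop hsub)
    rw [finrank_top, f1] at f4
    omega
  omega
end
end

section
/- (Theorem 2) Fix N ≥ 1 and d ≥ 2, and let M = d. Let Φ_1, …, Φ_d be unit vectors indexed by (Fin N → Fin d) such that for every k and every subsystem j : Fin N the one-qudit reduced density matrix of |Φ_k⟩⟨Φ_k| at site j equals (1/d)·I_d, and let λ_1, …, λ_d > 0 with ∑_k λ_k = 1. If it is NOT the case that both λ_k = 1/d for all k and the Φ_k are pairwise orthogonal, then the mixed state ρ = ∑_k λ_k |Φ_k⟩⟨Φ_k| is entangled, i.e. not fully separable. -/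
open scoped ComplexOrder

noncomputable section

open Matrix Finset in
/-- Cauchy–Schwarz for finite complex sums. -/
lemma cs_sq (n : ℕ) (x y : Fin n → ℂ) :
    ‖∑ k, (starRingEnd ℂ) (x k) * y k‖ ^ 2 ≤
      (∑ k, ‖x k‖ ^ 2) * (∑ k, ‖y k‖ ^ 2) := by
  set X : EuclideanSpace ℂ (Fin n) := (WithLp.equiv 2 _).symm x with hX
  set Y : EuclideanSpace ℂ (Fin n) := (WithLp.equiv 2 _).symm y with hY
  have h := norm_inner_le_norm (𝕜 := ℂ) X Y
  rw [PiLp.inner_apply] at h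
  have hx : ‖X‖ = Real.sqrt (∑ k, ‖x k‖ ^ 2) := by
    rw [EuclideanSpace.norm_eq]; simp [hX]
  have hy : ‖Y‖ = Real.sqrt (∑ k, ‖y k‖ ^ 2) := by
    rw [EuclideanSpace.norm_eq]; simp [hY]
  rw [hx, hy] at h
  have h2 : ‖∑ k, (starRingEnd ℂ) (x k) * y k‖ ≤
      Real.sqrt (∑ k, ‖x k‖ ^ 2) * Real.sqrt (∑ k, ‖y k‖ ^ 2) := by
    simpa [RCLike.inner_apply, hX, hY, mul_comm] using h
  calc ‖∑ k, (starRingEnd ℂ) (x k) * y k‖ ^ 2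
      ≤ (Real.sqrt (∑ k, ‖x k‖ ^ 2) * Real.sqrt (∑ k, ‖y k‖ ^ 2)) ^ 2 := by
        apply pow_le_pow_left₀ (norm_nonneg _) h2
    _ = (∑ k, ‖x k‖ ^ 2) * (∑ k, ‖y k‖ ^ 2) := by
        rw [mul_pow, Real.sq_sqrt (Finset.sum_nonneg fun k _ => sq_nonneg _),
          Real.sq_sqrt (Finset.sum_nonneg fun k _ => sq_nonneg _)]

open Matrix in
lemma trace_psd_aux (d : ℕ) (X : Matrix (Fin d) (Fin d) ℂ)
    (h1 : (Xᴴ * X).trace = 1) : ∑ i, ∑ k, ‖X k i‖ ^ 2 = 1 := by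
  have : (Xᴴ * X).trace = ((∑ i, ∑ k, ‖X k i‖ ^ 2 : ℝ) : ℂ) := by
    simp only [Matrix.trace, Matrix.diag, Matrix.mul_apply, Matrix.conjTranspose_apply]
    push_cast
    refine Finset.sum_congr rfl fun i _ => Finset.sum_congr rfl fun k _ => ?_
    rw [← Complex.ofReal_pow, ← Complex.normSq_eq_norm_sq, ← Complex.mul_conj, Complex.star_def]
    ring
  rw [h1] at this
  exact_mod_cast this.symm

open Matrix in
/-- The trace of the product of two PSD matrices of trace one lies in `[0,1]`. -/
lemma trace_mul_psd (d : ℕ) (A B : Matrix (Fin d) (Fin d) ℂ)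
    (hA : A.PosSemidef) (hB : B.PosSemidef) (hA1 : A.trace = 1) (hB1 : B.trace = 1) :
    ∃ t : ℝ, (A * B).trace = (t : ℂ) ∧ 0 ≤ t ∧ t ≤ 1 := by
  obtain ⟨X, rfl⟩ : ∃ X : Matrix (Fin d) (Fin d) ℂ, A = Xᴴ * X := by
    open scoped MatrixOrder in
    obtain ⟨Z, rfl⟩ := CStarAlgebra.nonneg_iff_eq_star_mul_self.mp hA.nonneg
    exact ⟨Z, rfl⟩
  obtain ⟨Y, rfl⟩ : ∃ Y : Matrix (Fin d) (Fin d) ℂ, B = Yᴴ * Y := by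
    open scoped MatrixOrder in
    obtain ⟨Z, rfl⟩ := CStarAlgebra.nonneg_iff_eq_star_mul_self.mp hB.nonneg
    exact ⟨Z, rfl⟩
  set C : Matrix (Fin d) (Fin d) ℂ := X * Yᴴ with hC
  have htr : (Xᴴ * X * (Yᴴ * Y)).trace = (C * Cᴴ).trace := by
    rw [hC, Matrix.conjTranspose_mul, Matrix.conjTranspose_conjTranspose]
    rw [show Xᴴ * X * (Yᴴ * Y) = Xᴴ * (X * Yᴴ * Y) by noncomm_ring]
    rw [Matrix.trace_mul_comm]
    noncomm_ring
  have hCC : (C * Cᴴ).trace = ((∑ i, ∑ j, ‖C i j‖ ^ 2 : ℝ) : ℂ) := by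
    simp only [Matrix.trace, Matrix.diag, Matrix.mul_apply, Matrix.conjTranspose_apply]
    push_cast
    refine Finset.sum_congr rfl fun i _ => Finset.sum_congr rfl fun j _ => ?_
    rw [← Complex.ofReal_pow, ← Complex.normSq_eq_norm_sq, ← Complex.mul_conj, Complex.star_def]
  refine ⟨∑ i, ∑ j, ‖C i j‖ ^ 2, htr.trans hCC, by positivity, ?_⟩
  have key : ∀ i j, ‖C i j‖ ^ 2 ≤
      (∑ k, ‖X i k‖ ^ 2) * (∑ k, ‖Y j k‖ ^ 2) := by
    intro i j
    have h := cs_sq d (fun k => (starRingEnd ℂ) (X i k)) (fun k => (starRingEnd ℂ) (Y j k))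
    have hCij : C i j = ∑ k, X i k * (starRingEnd ℂ) (Y j k) := by
      simp [hC, Matrix.mul_apply, Matrix.conjTranspose_apply, Complex.star_def]
    rw [hCij]
    simpa [Complex.norm_conj] using h
  have hX1 : ∑ i, ∑ k, ‖X i k‖ ^ 2 = 1 := by
    rw [Finset.sum_comm]; exact trace_psd_aux d X hA1
  have hY1 : ∑ j, ∑ k, ‖Y j k‖ ^ 2 = 1 := by
    rw [Finset.sum_comm]; exact trace_psd_aux d Y hB1
  calc ∑ i, ∑ j, ‖C i j‖ ^ 2
      ≤ ∑ i, ∑ j, (∑ k, ‖X i k‖ ^ 2) * (∑ k, ‖Y j k‖ ^ 2) :=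
        Finset.sum_le_sum fun i _ => Finset.sum_le_sum fun j _ => key i j
    _ = (∑ i, ∑ k, ‖X i k‖ ^ 2) * (∑ j, ∑ k, ‖Y j k‖ ^ 2) := by
        rw [Finset.sum_mul_sum]
    _ = 1 := by rw [hX1, hY1, mul_one]

lemma sum_insertAt_prod (N d : ℕ) (j : Fin N) (F : Fin N → Fin d → Fin d → ℂ) (x y : Fin d) :
    ∑ g : {i : Fin N // i ≠ j} → Fin d,
      ∏ k, F k (insertAt j x g k) (insertAt j y g k)
    = F j x y * ∏ k : {i : Fin N // i ≠ j}, ∑ z, F (k : Fin N) z z := by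
  have hsplit : ∀ g : {i : Fin N // i ≠ j} → Fin d,
      ∏ k, F k (insertAt j x g k) (insertAt j y g k)
      = F j x y * ∏ k : {i : Fin N // i ≠ j}, F (k : Fin N) (g k) (g k) := by
    intro g
    rw [← Finset.mul_prod_erase Finset.univ _ (Finset.mem_univ j)]
    congr 1
    · simp [insertAt]
    · rw [Finset.prod_subtype (p := fun i : Fin N => i ≠ j) (Finset.univ.erase j)
        (fun i => by simp) (fun i => F i (insertAt j x g i) (insertAt j y g i))]
      refine Finset.prod_congr rfl fun i hi => ?_
      have hij : (i : Fin N) ≠ j := i.2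
      simp [insertAt, hij]
  simp only [hsplit, ← Finset.mul_sum]
  congr 1
  rw [Finset.prod_univ_sum]
  simp [Fintype.piFinset_univ]

lemma sum_sum_prod (N d : ℕ) (G : Fin N → Fin d → Fin d → ℂ) :
    ∑ a : Fin N → Fin d, ∑ b : Fin N → Fin d, ∏ k, G k (a k) (b k)
    = ∏ k, ∑ x, ∑ y, G k x y := by
  rw [Finset.prod_univ_sum]
  simp only [Fintype.piFinset_univ]
  refine Finset.sum_congr rfl fun a _ => ?_
  rw [Finset.prod_univ_sum]
  simp [Fintype.piFinset_univ]

lemma swap4 {α β γ δ : Type*} [Fintype α] [Fintype β] [Fintype γ] [Fintype δ]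
    (f : α → β → γ → δ → ℂ) :
    ∑ a, ∑ b, ∑ k, ∑ l, f a b k l = ∑ k, ∑ l, ∑ a, ∑ b, f a b k l := by
  have h1 : ∀ a : α, ∑ b : β, ∑ k : γ, ∑ l : δ, f a b k l
      = ∑ k : γ, ∑ b : β, ∑ l : δ, f a b k l := fun a => Finset.sum_comm
  have h2 : ∀ (a : α) (k : γ), ∑ b : β, ∑ l : δ, f a b k l
      = ∑ l : δ, ∑ b : β, f a b k l := fun a k => Finset.sum_comm
  simp only [h1, h2]
  rw [Finset.sum_comm]
  exact Finset.sum_congr rfl fun k _ => Finset.sum_comm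

open Matrix in
lemma trace_pure_mul {α : Type*} [Fintype α] [DecidableEq α] (φ ψ : α → ℂ) :
    (pureMat φ * pureMat ψ).trace =
      (starRingEnd ℂ) (∑ a, (starRingEnd ℂ) (φ a) * ψ a) *
        (∑ a, (starRingEnd ℂ) (φ a) * ψ a) := by
  simp only [Matrix.trace, Matrix.diag, Matrix.mul_apply, pureMat, Matrix.of_apply,
    map_sum, _root_.map_mul, Complex.conj_conj]
  rw [Finset.sum_mul_sum]
  refine Finset.sum_congr rfl fun a _ => Finset.sum_congr rfl fun b _ => ?_
  ring

/-- Theorem 2 of the paper: mixing `M = d` entangled `N`-partite pure states with maximally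
mixed one-qudit reduced density matrices and strictly positive weights yields an entangled
state, except possibly in the case where the weights are all equal to `1/d` and the states
are pairwise orthogonal. -/
theorem mixture_entangled_of_card_eq_dim
    (N d : ℕ) (hN : 1 ≤ N) (hd : 2 ≤ d)
    (Φ : Fin d → (Fin N → Fin d) → ℂ)
    (hunit : ∀ k, ∑ a, ‖Φ k a‖ ^ 2 = 1)
    (hred : ∀ k, ∀ j : Fin N, reduced (pureMat (Φ k)) j = (d : ℂ)⁻¹ • 1)
    (lam : Fin d → ℝ) (h0 : ∀ k, 0 < lam k) (h1 : ∑ k, lam k = 1)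
    (hnot : ¬ ((∀ k, lam k = 1 / (d : ℝ)) ∧
      (∀ k l, k ≠ l → ∑ a, (starRingEnd ℂ) (Φ k a) * Φ l a = 0))) :
    ¬ FullySeparable (∑ k, lam k • pureMat (Φ k)) := by
  intro hsep
  obtain ⟨m, p, σ, hp0, hp1, hσ, hdec⟩ := hsep
  set M : Matrix (Fin N → Fin d) (Fin N → Fin d) ℂ := ∑ k, lam k • pureMat (Φ k) with hM
  have hdR : (0:ℝ) < d := by
    have : (2:ℝ) ≤ d := by exact_mod_cast hd
    linarith
  have hdC : (d:ℂ) ≠ 0 := by exact_mod_cast (show (d:ℝ) ≠ 0 from ne_of_gt hdR)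
  set j : Fin N := ⟨0, hN⟩ with hj
  set c : Fin d → Fin d → ℂ := fun k l => ∑ a, (starRingEnd ℂ) (Φ k a) * Φ l a with hc
  have habs : ∀ z : ℂ, (starRingEnd ℂ) z * z = ((‖z‖ ^ 2 : ℝ) : ℂ) := fun z => by
    rw [mul_comm, Complex.mul_conj, Complex.normSq_eq_norm_sq]
  have htrf : (M * M).trace = ∑ a, ∑ b, M a b * M b a := by
    simp [Matrix.trace, Matrix.diag, Matrix.mul_apply]
  -- pure side
  have hTpure : (M * M).trace
      = ((∑ k, ∑ l, lam k * lam l * ‖c k l‖ ^ 2 : ℝ) : ℂ) := by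
    rw [hM, Finset.sum_mul_sum, Matrix.trace_sum]
    push_cast
    refine Finset.sum_congr rfl fun k _ => ?_
    rw [Matrix.trace_sum]
    refine Finset.sum_congr rfl fun l _ => ?_
    rw [smul_mul_assoc, mul_smul_comm, Matrix.trace_smul, Matrix.trace_smul, trace_pure_mul]
    rw [show (∑ a, (starRingEnd ℂ) (Φ k a) * Φ l a) = c k l from rfl]
    rw [habs (c k l)]
    rw [Complex.real_smul, Complex.real_smul]
    push_cast
    ring
  -- decomposition side
  have hTdec : (M * M).trace
      = ∑ i, ∑ i', ((p i * p i' : ℝ) : ℂ) * ∏ k, (σ i k * σ i' k).trace := by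
    rw [htrf]
    have hexp : ∀ a b, M a b * M b a
        = ∑ i, ∑ i', ((p i * p i' : ℝ) : ℂ)
            * ∏ k, (σ i k (a k) (b k) * σ i' k (b k) (a k)) := by
      intro a b
      rw [hdec a b, hdec b a, Finset.sum_mul_sum]
      refine Finset.sum_congr rfl fun i _ => Finset.sum_congr rfl fun i' _ => ?_
      push_cast
      rw [Finset.prod_mul_distrib]
      ring
    simp only [hexp]
    rw [swap4]
    refine Finset.sum_congr rfl fun i _ => Finset.sum_congr rfl fun i' _ => ?_
    simp only [← Finset.mul_sum]
    congr 1
    rw [sum_sum_prod N d (fun k u v => σ i k u v * σ i' k v u)]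
    refine Finset.prod_congr rfl fun k _ => ?_
    simp [Matrix.trace, Matrix.diag, Matrix.mul_apply]
  -- the reduced state of M at j
  have hredM : reduced M j = (d:ℂ)⁻¹ • 1 := by
    ext x y
    simp only [reduced, Matrix.of_apply]
    have hent : ∀ g : {i : Fin N // i ≠ j} → Fin d,
        M (insertAt j x g) (insertAt j y g)
        = ∑ k, (lam k : ℂ) * pureMat (Φ k) (insertAt j x g) (insertAt j y g) := by
      intro g
      rw [hM]
      simp [Matrix.sum_apply, Complex.real_smul]
    simp only [hent]
    rw [Finset.sum_comm]
    have hk : ∀ k, (∑ g : {i : Fin N // i ≠ j} → Fin d,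
        (lam k : ℂ) * pureMat (Φ k) (insertAt j x g) (insertAt j y g))
        = (lam k : ℂ) * (((d:ℂ)⁻¹ • (1 : Matrix (Fin d) (Fin d) ℂ)) x y) := by
      intro k
      rw [← Finset.mul_sum]
      congr 1
      exact congrFun (congrFun (hred k j) x) y
    simp only [hk]
    rw [← Finset.sum_mul]
    have hs1 : (∑ k, (lam k : ℂ)) = 1 := by
      rw [← Complex.ofReal_sum, h1, Complex.ofReal_one]
    rw [hs1, one_mul]
  -- the marginal from the decomposition
  have hmarg : ∀ x y : Fin d, ∑ i, (p i : ℂ) * σ i j x y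
      = ((d:ℂ)⁻¹ • (1 : Matrix (Fin d) (Fin d) ℂ)) x y := by
    intro x y
    have h := congrFun (congrFun hredM x) y
    rw [← h]
    simp only [reduced, Matrix.of_apply]
    simp only [hdec]
    rw [Finset.sum_comm]
    refine Finset.sum_congr rfl fun i _ => ?_
    rw [← Finset.mul_sum]
    congr 1
    rw [sum_insertAt_prod N d j (fun k u v => σ i k u v) x y]
    have hone : ∀ k : {i' : Fin N // i' ≠ j}, ∑ z, σ i (k : Fin N) z z = 1 := by
      intro k
      have := (hσ i (k : Fin N)).2
      simpa [Matrix.trace, Matrix.diag] using this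
    rw [Finset.prod_congr rfl fun k _ => hone k]
    simp
  -- the site-j sum
  have hsumj : ∑ i, ∑ i', ((p i * p i' : ℝ) : ℂ) * (σ i j * σ i' j).trace
      = (((d:ℝ)⁻¹ : ℝ) : ℂ) := by
    have hexp : ∀ i i', ((p i * p i' : ℝ) : ℂ) * (σ i j * σ i' j).trace
        = ∑ x, ∑ y, ((p i : ℂ) * σ i j x y) * ((p i' : ℂ) * σ i' j y x) := by
      intro i i'
      simp only [Matrix.trace, Matrix.diag, Matrix.mul_apply, Finset.mul_sum]
      push_cast
      exact Finset.sum_congr rfl fun x _ => Finset.sum_congr rfl fun y _ => by ring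
    simp only [hexp]
    rw [swap4]
    have hxy : ∀ x y : Fin d, ∑ i, ∑ i', ((p i : ℂ) * σ i j x y) * ((p i' : ℂ) * σ i' j y x)
        = ((d:ℂ)⁻¹ • (1 : Matrix (Fin d) (Fin d) ℂ)) x y
            * ((d:ℂ)⁻¹ • (1 : Matrix (Fin d) (Fin d) ℂ)) y x := by
      intro x y
      rw [← Finset.sum_mul_sum, hmarg x y, hmarg y x]
    simp only [hxy]
    simp only [Matrix.smul_apply, Matrix.one_apply, smul_eq_mul, mul_ite, mul_one, mul_zero,
      ite_mul, zero_mul]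
    rw [Finset.sum_comm]
    simp only [Finset.sum_ite_eq, Finset.mem_univ, if_true]
    rw [Finset.sum_const, Finset.card_univ, Fintype.card_fin, nsmul_eq_mul]
    push_cast
    field_simp
  -- choose real traces in [0,1]
  choose t ht ht0 ht1 using fun i i' k =>
    trace_mul_psd d (σ i k) (σ i' k) (hσ i k).1 (hσ i' k).1 (hσ i k).2 (hσ i' k).2
  have hQ : (M * M).trace = ((∑ i, ∑ i', p i * p i' * ∏ k, t i i' k : ℝ) : ℂ) := by
    rw [hTdec]
    push_cast
    refine Finset.sum_congr rfl fun i _ => Finset.sum_congr rfl fun i' _ => ?_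
    rw [Finset.prod_congr rfl fun k _ => ht i i' k]
  have hPQ : (∑ k, ∑ l, lam k * lam l * ‖c k l‖ ^ 2)
      = ∑ i, ∑ i', p i * p i' * ∏ k, t i i' k := by
    have h2 := hTpure.symm.trans hQ
    exact_mod_cast h2
  have hjreal : ∑ i, ∑ i', p i * p i' * t i i' j = (d:ℝ)⁻¹ := by
    have h2 : ((∑ i, ∑ i', p i * p i' * t i i' j : ℝ) : ℂ) = (((d:ℝ)⁻¹ : ℝ) : ℂ) := by
      rw [← hsumj]
      push_cast
      refine Finset.sum_congr rfl fun i _ => Finset.sum_congr rfl fun i' _ => ?_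
      rw [ht i i' j]
    exact_mod_cast h2
  have hQle : ∑ i, ∑ i', p i * p i' * ∏ k, t i i' k ≤ (d:ℝ)⁻¹ := by
    rw [← hjreal]
    refine Finset.sum_le_sum fun i _ => Finset.sum_le_sum fun i' _ => ?_
    have hle : ∏ k, t i i' k ≤ t i i' j := by
      rw [← Finset.mul_prod_erase Finset.univ _ (Finset.mem_univ j)]
      have hrest : ∏ k ∈ Finset.univ.erase j, t i i' k ≤ 1 :=
        Finset.prod_le_one (fun k _ => ht0 i i' k) (fun k _ => ht1 i i' k)
      have hrest0 : 0 ≤ ∏ k ∈ Finset.univ.erase j, t i i' k :=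
        Finset.prod_nonneg fun k _ => ht0 i i' k
      nlinarith [ht0 i i' j]
    have hpp : 0 ≤ p i * p i' := mul_nonneg (hp0 i) (hp0 i')
    nlinarith
  have hckk : ∀ k, c k k = 1 := by
    intro k
    have h2 : c k k = ((∑ a, ‖Φ k a‖ ^ 2 : ℝ) : ℂ) := by
      rw [hc, Complex.ofReal_sum]
      exact Finset.sum_congr rfl fun a _ => habs (Φ k a)
    rw [h2, hunit k]
    norm_num
  set f : Fin d → Fin d → ℝ := fun k l => lam k * lam l * ‖c k l‖ ^ 2 with hf
  have hf0 : ∀ k l, 0 ≤ f k l := fun k l =>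
    mul_nonneg (mul_nonneg (h0 k).le (h0 l).le) (sq_nonneg _)
  have hPsplit : ∑ k, ∑ l, f k l
      = (∑ k, lam k ^ 2) + ∑ k, ∑ l ∈ Finset.univ.erase k, f k l := by
    rw [← Finset.sum_add_distrib]
    refine Finset.sum_congr rfl fun k _ => ?_
    rw [← Finset.add_sum_erase Finset.univ (f k) (Finset.mem_univ k)]
    congr 1
    simp only [hf, hckk k]
    simp
    ring
  have hsq : ∑ k, (lam k - (d:ℝ)⁻¹) ^ 2 = (∑ k, lam k ^ 2) - (d:ℝ)⁻¹ := by
    have hcard : ((Finset.univ : Finset (Fin d)).card : ℝ) = d := by simp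
    calc ∑ k, (lam k - (d:ℝ)⁻¹) ^ 2
        = ∑ k, (lam k ^ 2 - 2 * (d:ℝ)⁻¹ * lam k + (d:ℝ)⁻¹ ^ 2) :=
          Finset.sum_congr rfl fun k _ => by ring
      _ = (∑ k, lam k ^ 2) - 2 * (d:ℝ)⁻¹ * (∑ k, lam k)
            + ((Finset.univ : Finset (Fin d)).card : ℝ) * (d:ℝ)⁻¹ ^ 2 := by
          rw [Finset.sum_add_distrib, Finset.sum_sub_distrib, ← Finset.mul_sum,
            Finset.sum_const, nsmul_eq_mul]
      _ = (∑ k, lam k ^ 2) - (d:ℝ)⁻¹ := by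
          rw [h1, hcard]
          field_simp
          ring
  have hE0 : 0 ≤ ∑ k, ∑ l ∈ Finset.univ.erase k, f k l :=
    Finset.sum_nonneg fun k _ => Finset.sum_nonneg fun l _ => hf0 k l
  have hsq0 : 0 ≤ ∑ k, (lam k - (d:ℝ)⁻¹) ^ 2 :=
    Finset.sum_nonneg fun k _ => sq_nonneg _
  have hkey : ∑ k, (lam k - (d:ℝ)⁻¹) ^ 2 + ∑ k, ∑ l ∈ Finset.univ.erase k, f k l ≤ 0 := by
    have hP : ∑ k, ∑ l, f k l ≤ (d:ℝ)⁻¹ := by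
      rw [hf]
      calc ∑ k, ∑ l, lam k * lam l * ‖c k l‖ ^ 2
          = ∑ i, ∑ i', p i * p i' * ∏ k, t i i' k := hPQ
        _ ≤ (d:ℝ)⁻¹ := hQle
    rw [hPsplit] at hP
    linarith [hsq]
  have hz1 : ∑ k, (lam k - (d:ℝ)⁻¹) ^ 2 = 0 := le_antisymm (by linarith) hsq0
  have hz2 : ∑ k, ∑ l ∈ Finset.univ.erase k, f k l = 0 := le_antisymm (by linarith) hE0
  apply hnot
  constructor
  · intro k
    have h2 := (Finset.sum_eq_zero_iff_of_nonneg (fun k _ => sq_nonneg _)).mp hz1 k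
      (Finset.mem_univ k)
    have h3 : lam k - (d:ℝ)⁻¹ = 0 := by
      exact pow_eq_zero_iff (by norm_num) |>.mp h2
    rw [one_div]
    linarith
  · intro k l hkl
    have h2 := (Finset.sum_eq_zero_iff_of_nonneg (fun k _ =>
      Finset.sum_nonneg fun l _ => hf0 k l)).mp hz2 k (Finset.mem_univ k)
    have h3 := (Finset.sum_eq_zero_iff_of_nonneg (fun l _ => hf0 k l)).mp h2 l
      (Finset.mem_erase.mpr ⟨hkl.symm, Finset.mem_univ l⟩)
    have h4 : ‖c k l‖ ^ 2 = 0 := by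
      have hkpos := h0 k
      have hlpos := h0 l
      by_contra h5
      have : 0 < lam k * lam l * ‖c k l‖ ^ 2 := by
        have : 0 < ‖c k l‖ ^ 2 :=
          lt_of_le_of_ne (by positivity) (Ne.symm h5)
        positivity
      simp only [hf] at h3
      linarith
    have h6 : c k l = 0 := by
      have := pow_eq_zero_iff (n := 2) (by norm_num) |>.mp h4
      exact norm_eq_zero.mp this
    exact h6
end
end

section
/- (Theorem 3) Let Φ_1, …, Φ_M be unit vectors indexed by (Fin N → Fin d), N ≥ 3, such that for every k and every subsystem j : Fin N, the (N−1)-partite state obtained from |Φ_k⟩⟨Φ_k| by tracing out subsystem j is fully separable. Let λ_1, …, λ_M > 0 with ∑_k λ_k = 1 and set ρ = ∑_k λ_k |Φ_k⟩⟨Φ_k|. If tr (ρ_j)² < tr ρ² for every subsystem j : Fin N, then ρ is genuinely multipartite entangled: for every subset S of Fin N with S nonempty and S ≠ Fin N, ρ is not separable across the bipartition (S, Sᶜ). -/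
open scoped ComplexOrder

noncomputable section

/-- Tracing out subsystem `j`, leaving a state on the remaining `N - 1` subsystems. -/
def traceOut {N d : ℕ} (ρ : Matrix (Fin N → Fin d) (Fin N → Fin d) ℂ) (j : Fin N) :
    Matrix ({i : Fin N // i ≠ j} → Fin d) ({i : Fin N // i ≠ j} → Fin d) ℂ :=
  Matrix.of fun a b => ∑ x : Fin d, ρ (insertAt j x a) (insertAt j x b)

/-- Full separability of a multipartite `d`-level state with subsystems indexed by `ι`. -/
def FullySeparableOn (ι : Type*) [Fintype ι] (d : ℕ)
    (ρ : Matrix (ι → Fin d) (ι → Fin d) ℂ) : Prop :=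
  ∃ (m : ℕ) (p : Fin m → ℝ) (σ : Fin m → ι → Matrix (Fin d) (Fin d) ℂ),
    (∀ i, 0 ≤ p i) ∧ (∑ i, p i = 1) ∧
    (∀ i k, (σ i k).PosSemidef ∧ (σ i k).trace = 1) ∧
    (∀ a b, ρ a b = ∑ i, (p i : ℂ) * ∏ k, σ i k (a k) (b k))

/-- Separability of an `N`-partite state across the bipartition `(S, Sᶜ)`. -/
def SepAcross {N d : ℕ} (S : Finset (Fin N))
    (ρ : Matrix (Fin N → Fin d) (Fin N → Fin d) ℂ) : Prop :=
  ∃ (m : ℕ) (p : Fin m → ℝ)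
    (A : Fin m → Matrix ({i : Fin N // i ∈ S} → Fin d) ({i : Fin N // i ∈ S} → Fin d) ℂ)
    (B : Fin m → Matrix ({i : Fin N // i ∉ S} → Fin d) ({i : Fin N // i ∉ S} → Fin d) ℂ),
    (∀ i, 0 ≤ p i) ∧ (∑ i, p i = 1) ∧
    (∀ i, (A i).PosSemidef ∧ (A i).trace = 1) ∧
    (∀ i, (B i).PosSemidef ∧ (B i).trace = 1) ∧
    (∀ a b : Fin N → Fin d,
      ρ a b = ∑ i, (p i : ℂ)
        * A i (fun k => a k.1) (fun k => b k.1)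
        * B i (fun k => a k.1) (fun k => b k.1))

set_option linter.unusedSectionVars false
set_option linter.unusedVariables false
set_option maxHeartbeats 1000000

section helpers
open scoped Matrix
variable {n : Type*} [Fintype n] [DecidableEq n]

lemma trace_mul_sum (X Y : Matrix n n ℂ) :
    (X * Y).trace = ∑ a, ∑ b, X a b * Y b a := by
  simp [Matrix.trace, Matrix.mul_apply, Matrix.diag]

lemma trace_conjTranspose_mul_self_nonneg (D : Matrix n n ℂ) :
    0 ≤ (Dᴴ * D).trace := by
  rw [trace_mul_sum]
  refine Finset.sum_nonneg fun a _ => Finset.sum_nonneg fun b _ => ?_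
  simp only [Matrix.conjTranspose_apply]
  exact star_mul_self_nonneg _

section psdhelp
open scoped MatrixOrder

lemma psd_eq_ctm {X : Matrix n n ℂ} (hX : X.PosSemidef) : ∃ P : Matrix n n ℂ, X = Pᴴ * P := by
  obtain ⟨B, hB⟩ := CStarAlgebra.nonneg_iff_eq_star_mul_self.mp hX.nonneg
  exact ⟨B, hB⟩

end psdhelp

lemma trace_mul_nonneg {X Y : Matrix n n ℂ} (hX : X.PosSemidef) (hY : Y.PosSemidef) :
    0 ≤ (X * Y).trace := by
  obtain ⟨P, rfl⟩ := psd_eq_ctm hX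
  obtain ⟨Q, rfl⟩ := psd_eq_ctm hY
  have h : Pᴴ * P * (Qᴴ * Q) = Pᴴ * (P * (Qᴴ * Q)) := by rw [Matrix.mul_assoc]
  rw [h, Matrix.trace_mul_comm]
  have h2 : P * (Qᴴ * Q) * Pᴴ = (Q * Pᴴ)ᴴ * (Q * Pᴴ) := by
    simp [Matrix.conjTranspose_mul, Matrix.mul_assoc]
  rw [h2]
  exact trace_conjTranspose_mul_self_nonneg _

lemma sum_abs_sq_le_one {X : Matrix n n ℂ} (hX : X.PosSemidef) (htr : X.trace = 1) :
    ∑ a, ∑ b, ‖X a b‖ ^ 2 ≤ 1 := by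
  obtain ⟨P, hP⟩ := psd_eq_ctm hX
  have hdiag : ∀ a, X a a = ((∑ c, ‖P c a‖ ^ 2 : ℝ) : ℂ) := by
    intro a
    rw [hP]
    simp only [Matrix.mul_apply, Matrix.conjTranspose_apply, Complex.ofReal_sum]
    refine Finset.sum_congr rfl fun c _ => ?_
    rw [Complex.star_def, ← Complex.normSq_eq_conj_mul_self, ← Complex.sq_norm,
      Complex.ofReal_pow]
  have hsum : ∑ a, ∑ c, ‖P c a‖ ^ 2 = 1 := by
    have h1 : X.trace = ((∑ a, ∑ c, ‖P c a‖ ^ 2 : ℝ) : ℂ) := by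
      simp only [Matrix.trace, Matrix.diag]
      rw [Complex.ofReal_sum]
      exact Finset.sum_congr rfl fun a _ => hdiag a
    rw [htr] at h1
    exact_mod_cast h1.symm
  have hentry : ∀ a b, ‖X a b‖ ^ 2
      ≤ (∑ c, ‖P c a‖ ^ 2) * ∑ c, ‖P c b‖ ^ 2 := by
    intro a b
    have h1 : ‖X a b‖ ≤ ∑ c, ‖P c a‖ * ‖P c b‖ := by
      rw [hP]
      simp only [Matrix.mul_apply, Matrix.conjTranspose_apply]
      refine (norm_sum_le _ _).trans (le_of_eq ?_)
      refine Finset.sum_congr rfl fun c _ => ?_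
      rw [norm_mul, Complex.star_def, Complex.norm_conj]
    calc ‖X a b‖ ^ 2
        ≤ (∑ c, ‖P c a‖ * ‖P c b‖) ^ 2 := by
          apply pow_le_pow_left₀ (norm_nonneg _) h1
      _ ≤ _ := Finset.sum_mul_sq_le_sq_mul_sq _ _ _
  calc ∑ a, ∑ b, ‖X a b‖ ^ 2
      ≤ ∑ a, ∑ b, (∑ c, ‖P c a‖ ^ 2) * ∑ c, ‖P c b‖ ^ 2 :=
        Finset.sum_le_sum fun a _ => Finset.sum_le_sum fun b _ => hentry a b
    _ = 1 := by
        rw [← Finset.sum_mul_sum]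
        rw [hsum]; ring

lemma trace_mul_le_one {X Y : Matrix n n ℂ} (hX : X.PosSemidef) (hY : Y.PosSemidef)
    (htX : X.trace = 1) (htY : Y.trace = 1) : (X * Y).trace ≤ 1 := by
  have h0 : 0 ≤ (X * Y).trace := trace_mul_nonneg hX hY
  have him : ((X * Y).trace).im = 0 := by
    have := (Complex.le_def.mp h0).2
    simpa using this.symm
  have hre : ((X * Y).trace).re ≤ 1 := by
    set L := ∑ p : n × n, ‖X p.1 p.2‖ * ‖Y p.1 p.2‖ with hL
    have hzL : ((X * Y).trace).re ≤ L := by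
      refine (Complex.re_le_norm _).trans ?_
      rw [trace_mul_sum, hL, Fintype.sum_prod_type]
      refine (norm_sum_le _ _).trans ?_
      refine Finset.sum_le_sum fun a _ => ?_
      refine (norm_sum_le _ _).trans (le_of_eq ?_)
      refine Finset.sum_congr rfl fun b _ => ?_
      rw [norm_mul]
      congr 1
      have h : Y b a = star (Y a b) := by
        conv_lhs => rw [← hY.1]
        rfl
      rw [h, Complex.star_def, Complex.norm_conj]
    have hLnn : 0 ≤ L :=
      Finset.sum_nonneg fun p _ => mul_nonneg (norm_nonneg _) (norm_nonneg _)
    have hcs : L ^ 2 ≤ (∑ p : n × n, ‖X p.1 p.2‖ ^ 2)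
        * ∑ p : n × n, ‖Y p.1 p.2‖ ^ 2 := by
      rw [hL]; exact Finset.sum_mul_sq_le_sq_mul_sq _ _ _
    have hX2 : ∑ p : n × n, ‖X p.1 p.2‖ ^ 2 ≤ 1 := by
      rw [Fintype.sum_prod_type]; exact sum_abs_sq_le_one hX htX
    have hY2 : ∑ p : n × n, ‖Y p.1 p.2‖ ^ 2 ≤ 1 := by
      rw [Fintype.sum_prod_type]; exact sum_abs_sq_le_one hY htY
    have hXnn : (0:ℝ) ≤ ∑ p : n × n, ‖X p.1 p.2‖ ^ 2 :=
      Finset.sum_nonneg fun p _ => sq_nonneg _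
    nlinarith [hzL, hLnn, hcs]
  exact Complex.le_def.mpr ⟨by simpa using hre, by simpa using him⟩

lemma sum_fun_prod {κ : Type*} [Fintype κ] [DecidableEq κ] {δ : Type*} [Fintype δ]
    (f : κ → δ → ℂ) : ∑ c : κ → δ, ∏ l, f l (c l) = ∏ l, ∑ x, f l x := by
  classical
  rw [Finset.prod_univ_sum]
  rw [Fintype.piFinset_univ]

lemma trace_tensor_mul {κ : Type*} [Fintype κ] [DecidableEq κ] {d : ℕ}
    (f g : κ → Matrix (Fin d) (Fin d) ℂ) :
    ∑ a : κ → Fin d, ∑ b : κ → Fin d, (∏ l, f l (a l) (b l)) * ∏ l, g l (b l) (a l)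
      = ∏ l, (f l * g l).trace := by
  classical
  calc ∑ a : κ → Fin d, ∑ b : κ → Fin d, (∏ l, f l (a l) (b l)) * ∏ l, g l (b l) (a l)
      = ∑ a : κ → Fin d, ∑ b : κ → Fin d, ∏ l, (f l (a l) (b l) * g l (b l) (a l)) := by
        refine Finset.sum_congr rfl fun a _ => Finset.sum_congr rfl fun b _ => ?_
        rw [← Finset.prod_mul_distrib]
    _ = ∑ a : κ → Fin d, ∏ l, (∑ y, f l (a l) y * g l y (a l)) := by
        refine Finset.sum_congr rfl fun a _ => ?_
        exact sum_fun_prod (fun l y => f l (a l) y * g l y (a l))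
    _ = ∏ l, ∑ x, ∑ y, f l x y * g l y x :=
        sum_fun_prod (fun l x => ∑ y, f l x y * g l y x)
    _ = ∏ l, (f l * g l).trace := by
        refine Finset.prod_congr rfl fun l _ => ?_
        rw [trace_mul_sum]

lemma trace_sum_smul_sq {ι : Type*} [Fintype ι] (Q : ι → ℝ) (X : ι → Matrix n n ℂ) :
    ((∑ u, Q u • X u) * ∑ u, Q u • X u).trace
      = ∑ u, ∑ u', ((Q u * Q u' : ℝ) : ℂ) * (X u * X u').trace := by
  rw [Matrix.sum_mul, Matrix.trace_sum]
  refine Finset.sum_congr rfl fun u _ => ?_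
  rw [Matrix.mul_sum, Matrix.trace_sum]
  refine Finset.sum_congr rfl fun u' _ => ?_
  rw [Matrix.smul_mul, Matrix.mul_smul, smul_smul, Matrix.trace_smul]
  rw [Complex.real_smul]

lemma sum_factor {β γ : Type*} [Fintype β] [Fintype γ] [DecidableEq β] [DecidableEq γ]
    (A A' : Matrix β β ℂ) (B B' : Matrix γ γ ℂ) :
    ∑ P : β × γ, ∑ Q : β × γ, A P.1 Q.1 * B P.2 Q.2 * (A' Q.1 P.1 * B' Q.2 P.2)
      = (A * A').trace * (B * B').trace := by
  rw [trace_mul_sum, trace_mul_sum, Finset.sum_mul_sum]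
  simp only [Fintype.sum_prod_type]
  refine Finset.sum_congr rfl fun u _ => ?_
  refine Finset.sum_congr rfl fun uc _ => ?_
  rw [Finset.sum_mul_sum]
  refine Finset.sum_congr rfl fun v _ => ?_
  refine Finset.sum_congr rfl fun vc _ => ?_
  ring


lemma sum_comm4 {α β γ δ M : Type*} [AddCommMonoid M] [Fintype α] [Fintype β] [Fintype γ]
    [Fintype δ] (f : α → β → γ → δ → M) :
    ∑ a, ∑ b, ∑ i, ∑ j, f a b i j = ∑ i, ∑ j, ∑ a, ∑ b, f a b i j := by
  trans ∑ a, ∑ i, ∑ b, ∑ j, f a b i j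
  · exact Finset.sum_congr rfl fun a _ => Finset.sum_comm
  trans ∑ i, ∑ a, ∑ b, ∑ j, f a b i j
  · exact Finset.sum_comm
  refine Finset.sum_congr rfl fun i _ => ?_
  trans ∑ a, ∑ j, ∑ b, f a b i j
  · exact Finset.sum_congr rfl fun a _ => Finset.sum_comm
  exact Finset.sum_comm

end helpers

section equivs

/-- Splitting an assignment into its `S`-part and `Sᶜ`-part. -/
def splitEquiv (d : ℕ) {N : ℕ} (S : Finset (Fin N)) :
    (Fin N → Fin d) ≃ ({i : Fin N // i ∈ S} → Fin d) × ({i : Fin N // i ∉ S} → Fin d) where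
  toFun a := (fun k => a k.1, fun k => a k.1)
  invFun p i := if h : i ∈ S then p.1 ⟨i, h⟩ else p.2 ⟨i, h⟩
  left_inv a := by
    funext i; by_cases h : i ∈ S <;> simp [h]
  right_inv p := by
    obtain ⟨u, c⟩ := p
    simp only [Prod.mk.injEq]
    constructor
    · funext k; simp [k.2]
    · funext k
      have hk := k.2
      simp [hk]

/-- Splitting an `Sᶜ`-assignment into the value at `j₀ ∉ S` and the rest. -/
def eCEquiv (d : ℕ) {N : ℕ} (S : Finset (Fin N)) (j₀ : Fin N) (hj₀ : j₀ ∉ S) :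
    ({i : Fin N // i ∉ S} → Fin d) ≃
      Fin d × ({l : {i : Fin N // i ≠ j₀} // l.1 ∉ S} → Fin d) where
  toFun c := (c ⟨j₀, hj₀⟩, fun l => c ⟨l.1.1, l.2⟩)
  invFun p i := if h : i.1 = j₀ then p.1 else p.2 ⟨⟨i.1, h⟩, i.2⟩
  left_inv c := by
    funext i
    by_cases h : i.1 = j₀
    · dsimp only
      rw [dif_pos h]
      congr 1
      exact (Subtype.ext h).symm
    · dsimp only
      rw [dif_neg h]
  right_inv p := by
    obtain ⟨x, c'⟩ := p
    simp only [Prod.mk.injEq]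
    constructor
    · simp
    · funext l
      rw [dif_neg l.1.2]

/-- Splitting an assignment on `Fin N \ {j}` (for `j ∈ S`) into its `S \ {j}`-part and
`Sᶜ`-part. -/
def eGEquiv (d : ℕ) {N : ℕ} (S : Finset (Fin N)) (j : Fin N) (hj : j ∈ S) :
    ({i : Fin N // i ≠ j} → Fin d) ≃
      ({l : {i : Fin N // i ∈ S} // l ≠ ⟨j, hj⟩} → Fin d) × ({i : Fin N // i ∉ S} → Fin d) where
  toFun g := (fun l => g ⟨l.1.1, fun h => l.2 (Subtype.ext h)⟩,
              fun i => g ⟨i.1, fun h => i.2 (h ▸ hj)⟩)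
  invFun p i := if h : i.1 ∈ S then
      p.1 ⟨⟨i.1, h⟩, fun heq => i.2 (congrArg Subtype.val heq)⟩
    else p.2 ⟨i.1, h⟩
  left_inv g := by
    funext i
    by_cases h : i.1 ∈ S <;> simp [h]
  right_inv p := by
    obtain ⟨e, c⟩ := p
    simp only [Prod.mk.injEq]
    constructor
    · funext l
      have hl : l.1.1 ∈ S := l.1.2
      simp only [hl, dif_pos]

    · funext i
      have hi := i.2
      simp [hi]

end equivs

/-- Gluing an `S`-assignment and an `Sᶜ`-assignment. -/
def glueFun (d : ℕ) {N : ℕ} (S : Finset (Fin N)) (a : {i : Fin N // i ∈ S} → Fin d)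
    (c : {i : Fin N // i ∉ S} → Fin d) : Fin N → Fin d :=
  fun i => if h : i ∈ S then a ⟨i, h⟩ else c ⟨i, h⟩

/-- Extending an `S`-assignment to `Fin N \ {j₀}` by an assignment on the rest. -/
def embFun (d : ℕ) {N : ℕ} (S : Finset (Fin N)) (j₀ : Fin N)
    (a : {i : Fin N // i ∈ S} → Fin d)
    (c' : {l : {i : Fin N // i ≠ j₀} // l.1 ∉ S} → Fin d) : {i : Fin N // i ≠ j₀} → Fin d :=
  fun l => if h : l.1 ∈ S then a ⟨l.1, h⟩ else c' ⟨l, h⟩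

/-- Extending an assignment on `S \ {j}` by a value at `j`. -/
def insSFun (d : ℕ) {N : ℕ} (S : Finset (Fin N)) (j : Fin N) (hj : j ∈ S) (x : Fin d)
    (e : {l : {i : Fin N // i ∈ S} // l ≠ ⟨j, hj⟩} → Fin d) : {i : Fin N // i ∈ S} → Fin d :=
  fun l => if h : l = ⟨j, hj⟩ then x else e ⟨l, h⟩

lemma glue_eCsymm (d : ℕ) {N : ℕ} (S : Finset (Fin N)) (j₀ : Fin N) (hj₀ : j₀ ∉ S)
    (a : {i : Fin N // i ∈ S} → Fin d) (x : Fin d)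
    (c' : {l : {i : Fin N // i ≠ j₀} // l.1 ∉ S} → Fin d) :
    glueFun d S a ((eCEquiv d S j₀ hj₀).symm (x, c')) = insertAt j₀ x (embFun d S j₀ a c') := by
  funext i
  by_cases hij : i = j₀
  · subst hij
    simp [glueFun, insertAt, eCEquiv, hj₀]
  · by_cases hiS : i ∈ S
    · simp [glueFun, insertAt, embFun, hij, hiS]
    · simp [glueFun, insertAt, embFun, eCEquiv, hij, hiS]

lemma insertAt_eGsymm (d : ℕ) {N : ℕ} (S : Finset (Fin N)) (j : Fin N) (hj : j ∈ S) (x : Fin d)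
    (e : {l : {i : Fin N // i ∈ S} // l ≠ ⟨j, hj⟩} → Fin d) (c : {i : Fin N // i ∉ S} → Fin d) :
    insertAt j x ((eGEquiv d S j hj).symm (e, c)) = glueFun d S (insSFun d S j hj x e) c := by
  funext i
  by_cases hij : i = j
  · subst hij
    simp [insertAt, glueFun, insSFun, hj]
  · by_cases hiS : i ∈ S
    · simp [insertAt, glueFun, insSFun, eGEquiv, hij, hiS, Subtype.ext_iff]
    · simp [insertAt, glueFun, eGEquiv, hij, hiS]

/-- The sites in `S` viewed inside `Fin N \ {j₀}`. -/
def eSSEquiv {N : ℕ} (S : Finset (Fin N)) (j₀ : Fin N) (hj₀ : j₀ ∉ S) :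
    {i : Fin N // i ∈ S} ≃ {l : {i : Fin N // i ≠ j₀} // l.1 ∈ S} where
  toFun s := ⟨⟨s.1, fun h => hj₀ (h ▸ s.2)⟩, s.2⟩
  invFun l := ⟨l.1.1, l.2⟩
  left_inv s := rfl
  right_inv l := rfl

lemma sum2_split {N : ℕ} (d : ℕ) (S : Finset (Fin N))
    (F : (({i : Fin N // i ∈ S} → Fin d) × ({i : Fin N // i ∉ S} → Fin d)) →
         (({i : Fin N // i ∈ S} → Fin d) × ({i : Fin N // i ∉ S} → Fin d)) → ℂ) :
    ∑ a : Fin N → Fin d, ∑ b : Fin N → Fin d,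
      F (fun k => a k.1, fun k => a k.1) (fun k => b k.1, fun k => b k.1)
      = ∑ P, ∑ Q, F P Q := by
  have h1 : ∀ P, ∑ b : Fin N → Fin d, F P (fun k => b k.1, fun k => b k.1) = ∑ Q, F P Q := by
    intro P
    have h := Equiv.sum_comp (splitEquiv d S) (F P)
    exact h
  calc ∑ a : Fin N → Fin d, ∑ b : Fin N → Fin d,
        F (fun k => a k.1, fun k => a k.1) (fun k => b k.1, fun k => b k.1)
      = ∑ a : Fin N → Fin d, ∑ Q, F (fun k => a k.1, fun k => a k.1) Q :=
        Finset.sum_congr rfl fun a _ => h1 _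
    _ = ∑ P, ∑ Q, F P Q := by
        have h := Equiv.sum_comp (splitEquiv d S) (fun P => ∑ Q, F P Q)
        exact h

lemma trace_tensor_of {κ : Type*} [Fintype κ] [DecidableEq κ] {d : ℕ}
    (f g : κ → Matrix (Fin d) (Fin d) ℂ) :
    ((Matrix.of fun a b : κ → Fin d => ∏ l, f l (a l) (b l)) *
      (Matrix.of fun a b : κ → Fin d => ∏ l, g l (a l) (b l))).trace
      = ∏ l, (f l * g l).trace := by
  rw [trace_mul_sum]
  have h := trace_tensor_mul f g
  rw [← h]
  rfl

lemma stepA {N d : ℕ} (S : Finset (Fin N)) {m : ℕ} (p : Fin m → ℝ)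
    (A : Fin m → Matrix ({i : Fin N // i ∈ S} → Fin d) ({i : Fin N // i ∈ S} → Fin d) ℂ)
    (B : Fin m → Matrix ({i : Fin N // i ∉ S} → Fin d) ({i : Fin N // i ∉ S} → Fin d) ℂ)
    (hp : ∀ i, 0 ≤ p i)
    (hA : ∀ i, (A i).PosSemidef ∧ (A i).trace = 1)
    (hB : ∀ i, (B i).PosSemidef ∧ (B i).trace = 1)
    (ρ : Matrix (Fin N → Fin d) (Fin N → Fin d) ℂ)
    (hrep : ∀ a b : Fin N → Fin d,
      ρ a b = ∑ i, (p i : ℂ) * A i (fun k => a k.1) (fun k => b k.1)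
        * B i (fun k => a k.1) (fun k => b k.1)) :
    (ρ * ρ).trace ≤ ((∑ i, p i • A i) * ∑ i, p i • A i).trace := by
  classical
  have hA1 : (ρ * ρ).trace
      = ∑ i, ∑ i', ((p i * p i' : ℝ) : ℂ) * ((A i * A i').trace * (B i * B i').trace) := by
    rw [trace_mul_sum]
    calc ∑ a, ∑ b, ρ a b * ρ b a
        = ∑ a : Fin N → Fin d, ∑ b : Fin N → Fin d, ∑ i, ∑ i',
            ((p i : ℂ) * A i (fun k => a k.1) (fun k => b k.1)
              * B i (fun k => a k.1) (fun k => b k.1))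
            * ((p i' : ℂ) * A i' (fun k => b k.1) (fun k => a k.1)
              * B i' (fun k => b k.1) (fun k => a k.1)) := by
          refine Finset.sum_congr rfl fun a _ => Finset.sum_congr rfl fun b _ => ?_
          rw [hrep a b, hrep b a, Finset.sum_mul_sum]
      _ = ∑ i, ∑ i', ∑ a : Fin N → Fin d, ∑ b : Fin N → Fin d,
            ((p i : ℂ) * A i (fun k => a k.1) (fun k => b k.1)
              * B i (fun k => a k.1) (fun k => b k.1))
            * ((p i' : ℂ) * A i' (fun k => b k.1) (fun k => a k.1)
              * B i' (fun k => b k.1) (fun k => a k.1)) := by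
          have h := sum_comm4 (fun (a b : Fin N → Fin d) (i i' : Fin m) =>
            ((p i : ℂ) * A i (fun k => a k.1) (fun k => b k.1)
              * B i (fun k => a k.1) (fun k => b k.1))
            * ((p i' : ℂ) * A i' (fun k => b k.1) (fun k => a k.1)
              * B i' (fun k => b k.1) (fun k => a k.1)))
          exact h
      _ = ∑ i, ∑ i', ((p i * p i' : ℝ) : ℂ) * ((A i * A i').trace * (B i * B i').trace) := by
          refine Finset.sum_congr rfl fun i _ => Finset.sum_congr rfl fun i' _ => ?_
          have e1 := sum2_split d S (fun P Q =>
            ((p i : ℂ) * A i P.1 Q.1 * B i P.2 Q.2)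
            * ((p i' : ℂ) * A i' Q.1 P.1 * B i' Q.2 P.2))
          rw [e1]
          have e2 :
              ∑ P : ({i : Fin N // i ∈ S} → Fin d) × ({i : Fin N // i ∉ S} → Fin d),
                ∑ Q : ({i : Fin N // i ∈ S} → Fin d) × ({i : Fin N // i ∉ S} → Fin d),
                ((p i : ℂ) * A i P.1 Q.1 * B i P.2 Q.2)
                * ((p i' : ℂ) * A i' Q.1 P.1 * B i' Q.2 P.2)
              = ∑ P : ({i : Fin N // i ∈ S} → Fin d) × ({i : Fin N // i ∉ S} → Fin d),
                ∑ Q : ({i : Fin N // i ∈ S} → Fin d) × ({i : Fin N // i ∉ S} → Fin d),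
                ((p i * p i' : ℝ) : ℂ)
                * (A i P.1 Q.1 * B i P.2 Q.2 * (A i' Q.1 P.1 * B i' Q.2 P.2)) := by
            refine Finset.sum_congr rfl fun P _ => Finset.sum_congr rfl fun Q _ => ?_
            push_cast
            ring
          rw [e2]
          simp only [← Finset.mul_sum]
          rw [sum_factor (A i) (A i') (B i) (B i')]
  rw [hA1, trace_sum_smul_sq]
  refine Finset.sum_le_sum fun i _ => Finset.sum_le_sum fun i' _ => ?_
  have h1 : 0 ≤ ((p i * p i' : ℝ) : ℂ) := by
    rw [Complex.zero_le_real]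
    exact mul_nonneg (hp i) (hp i')
  have h2 : 0 ≤ (A i * A i').trace := trace_mul_nonneg (hA i).1 (hA i').1
  have h3 : (B i * B i').trace ≤ 1 :=
    trace_mul_le_one (hB i).1 (hB i').1 (hB i).2 (hB i').2
  calc ((p i * p i' : ℝ) : ℂ) * ((A i * A i').trace * (B i * B i').trace)
      ≤ ((p i * p i' : ℝ) : ℂ) * ((A i * A i').trace * 1) :=
        mul_le_mul_of_nonneg_left (mul_le_mul_of_nonneg_left h3 h2) h1
    _ = ((p i * p i' : ℝ) : ℂ) * (A i * A i').trace := by ring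

lemma stepBC {N d : ℕ} (S : Finset (Fin N)) (j j₀ : Fin N) (hj : j ∈ S) (hj₀ : j₀ ∉ S)
    (ρ : Matrix (Fin N → Fin d) (Fin N → Fin d) ℂ)
    {ι' : Type} [Fintype ι'] (Q : ι' → ℝ) (hQ : ∀ u, 0 ≤ Q u)
    (σ : ι' → {i : Fin N // i ≠ j₀} → Matrix (Fin d) (Fin d) ℂ)
    (hσ : ∀ u l, (σ u l).PosSemidef ∧ (σ u l).trace = 1)
    (hrepτ : ∀ a b : {i : Fin N // i ≠ j₀} → Fin d,
      traceOut ρ j₀ a b = ∑ u, (Q u : ℂ) * ∏ l, σ u l (a l) (b l))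
    (W : Matrix ({i : Fin N // i ∈ S} → Fin d) ({i : Fin N // i ∈ S} → Fin d) ℂ)
    (hW : ∀ a b, W a b = ∑ c : {i : Fin N // i ∉ S} → Fin d,
      ρ (glueFun d S a c) (glueFun d S b c)) :
    (W * W).trace ≤ (reduced ρ j * reduced ρ j).trace := by
  classical
  have hne : ∀ l : {i : Fin N // i ∈ S}, l.1 ≠ j₀ := fun l h => hj₀ (h ▸ l.2)
  set σL : ι' → {i : Fin N // i ∈ S} → Matrix (Fin d) (Fin d) ℂ :=
    fun u l => σ u ⟨l.1, hne l⟩ with hσL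
  have hσL1 : ∀ u l, (σL u l).PosSemidef := by
    intro u l; simp only [hσL]; exact (hσ u _).1
  have hσL2 : ∀ u l, (σL u l).trace = 1 := by
    intro u l; simp only [hσL]; exact (hσ u _).2
  -- Step B : the entries of `W` in fully separable form
  have hBfull : ∀ a b : {i : Fin N // i ∈ S} → Fin d,
      W a b = ∑ u, (Q u : ℂ) * ∏ l, σL u l (a l) (b l) := by
    intro a b
    rw [hW]
    have e1 : ∑ c : {i : Fin N // i ∉ S} → Fin d, ρ (glueFun d S a c) (glueFun d S b c)
        = ∑ pr : Fin d × ({l : {i : Fin N // i ≠ j₀} // l.1 ∉ S} → Fin d),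
          ρ (glueFun d S a ((eCEquiv d S j₀ hj₀).symm pr))
            (glueFun d S b ((eCEquiv d S j₀ hj₀).symm pr)) := by
      have h := Equiv.sum_comp (eCEquiv d S j₀ hj₀).symm
        (fun c => ρ (glueFun d S a c) (glueFun d S b c))
      exact h.symm
    rw [e1, Fintype.sum_prod_type]
    have e2 : ∀ (x : Fin d) (c' : {l : {i : Fin N // i ≠ j₀} // l.1 ∉ S} → Fin d),
        ρ (glueFun d S a ((eCEquiv d S j₀ hj₀).symm (x, c')))
          (glueFun d S b ((eCEquiv d S j₀ hj₀).symm (x, c')))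
        = ρ (insertAt j₀ x (embFun d S j₀ a c')) (insertAt j₀ x (embFun d S j₀ b c')) := by
      intro x c'
      rw [glue_eCsymm, glue_eCsymm]
    simp only [e2]
    have e3 := Finset.sum_comm (s := (Finset.univ : Finset (Fin d)))
      (t := (Finset.univ : Finset ({l : {i : Fin N // i ≠ j₀} // l.1 ∉ S} → Fin d)))
      (f := fun x c' =>
        ρ (insertAt j₀ x (embFun d S j₀ a c')) (insertAt j₀ x (embFun d S j₀ b c')))
    rw [e3]
    have e4 : ∀ c' : {l : {i : Fin N // i ≠ j₀} // l.1 ∉ S} → Fin d,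
        ∑ x : Fin d,
          ρ (insertAt j₀ x (embFun d S j₀ a c')) (insertAt j₀ x (embFun d S j₀ b c'))
        = ∑ u, (Q u : ℂ) * ∏ l, σ u l (embFun d S j₀ a c' l) (embFun d S j₀ b c' l) :=
      fun c' => hrepτ (embFun d S j₀ a c') (embFun d S j₀ b c')
    simp only [e4]
    have e5 := Finset.sum_comm (s := (Finset.univ : Finset ({l : {i : Fin N // i ≠ j₀} // l.1 ∉ S} → Fin d)))
      (t := (Finset.univ : Finset ι'))
      (f := fun c' u => (Q u : ℂ) * ∏ l, σ u l (embFun d S j₀ a c' l) (embFun d S j₀ b c' l))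
    rw [e5]
    refine Finset.sum_congr rfl fun u _ => ?_
    rw [← Finset.mul_sum]
    congr 1
    have e6 : ∀ c' : {l : {i : Fin N // i ≠ j₀} // l.1 ∉ S} → Fin d,
        ∏ l, σ u l (embFun d S j₀ a c' l) (embFun d S j₀ b c' l)
        = (∏ l, σL u l (a l) (b l))
          * ∏ l' : {l : {i : Fin N // i ≠ j₀} // l.1 ∉ S}, σ u l'.1 (c' l') (c' l') := by
      intro c'
      rw [← Finset.prod_filter_mul_prod_filter_not Finset.univ (fun l => l.1 ∈ S)]
      congr 1
      · rw [Finset.prod_subtype (p := fun l : {i : Fin N // i ≠ j₀} => l.1 ∈ S)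
          (Finset.univ.filter (fun l : {i : Fin N // i ≠ j₀} => l.1 ∈ S))
          (by simp) (fun l => σ u l (embFun d S j₀ a c' l) (embFun d S j₀ b c' l))]
        have h := Fintype.prod_equiv (eSSEquiv S j₀ hj₀)
          (fun s => σL u s (a s) (b s))
          (fun l : {l : {i : Fin N // i ≠ j₀} // l.1 ∈ S} =>
            σ u l.1 (embFun d S j₀ a c' l.1) (embFun d S j₀ b c' l.1))
          (fun s => by
            simp only [hσL, embFun, eSSEquiv, Equiv.coe_fn_mk, dif_pos s.2]
            simp [s.2])
        exact h.symm
      · rw [Finset.prod_subtype (p := fun l : {i : Fin N // i ≠ j₀} => l.1 ∉ S)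
          (Finset.univ.filter (fun l : {i : Fin N // i ≠ j₀} => ¬ l.1 ∈ S))
          (by simp) (fun l => σ u l (embFun d S j₀ a c' l) (embFun d S j₀ b c' l))]
        refine Finset.prod_congr rfl fun l _ => ?_
        have hnm : ¬ l.1.1 ∈ S := l.2
        simp only [embFun, dif_neg hnm]
    simp only [e6]
    simp only [← Finset.mul_sum]
    have e7 : ∑ c' : {l : {i : Fin N // i ≠ j₀} // l.1 ∉ S} → Fin d,
        ∏ l' : {l : {i : Fin N // i ≠ j₀} // l.1 ∉ S}, σ u l'.1 (c' l') (c' l') = 1 := by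
      have hsf := sum_fun_prod (κ := {l : {i : Fin N // i ≠ j₀} // l.1 ∉ S}) (δ := Fin d)
        (fun l' z => σ u l'.1 z z)
      rw [hsf]
      refine Finset.prod_eq_one fun l' _ => ?_
      have h := (hσ u l'.1).2
      simp only [Matrix.trace, Matrix.diag] at h
      exact h
    rw [e7, mul_one]
  -- Step C1 : the reduced one-site matrix
  have hC1 : reduced ρ j = ∑ u, Q u • σL u ⟨j, hj⟩ := by
    ext x y
    show (∑ g : {i : Fin N // i ≠ j} → Fin d, ρ (insertAt j x g) (insertAt j y g)) = _
    have e1 : ∑ g : {i : Fin N // i ≠ j} → Fin d, ρ (insertAt j x g) (insertAt j y g)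
        = ∑ pr : ({l : {i : Fin N // i ∈ S} // l ≠ ⟨j, hj⟩} → Fin d)
            × ({i : Fin N // i ∉ S} → Fin d),
          ρ (insertAt j x ((eGEquiv d S j hj).symm pr))
            (insertAt j y ((eGEquiv d S j hj).symm pr)) := by
      have h := Equiv.sum_comp (eGEquiv d S j hj).symm
        (fun g => ρ (insertAt j x g) (insertAt j y g))
      exact h.symm
    rw [e1, Fintype.sum_prod_type]
    have e2 : ∀ (e : {l : {i : Fin N // i ∈ S} // l ≠ ⟨j, hj⟩} → Fin d)
        (c : {i : Fin N // i ∉ S} → Fin d),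
        ρ (insertAt j x ((eGEquiv d S j hj).symm (e, c)))
          (insertAt j y ((eGEquiv d S j hj).symm (e, c)))
        = ρ (glueFun d S (insSFun d S j hj x e) c) (glueFun d S (insSFun d S j hj y e) c) := by
      intro e c
      rw [insertAt_eGsymm, insertAt_eGsymm]
    simp only [e2]
    simp only [← hW]
    simp only [hBfull]
    have e3 := Finset.sum_comm
      (s := (Finset.univ : Finset ({l : {i : Fin N // i ∈ S} // l ≠ ⟨j, hj⟩} → Fin d)))
      (t := (Finset.univ : Finset ι'))
      (f := fun e u => (Q u : ℂ)
        * ∏ l, σL u l (insSFun d S j hj x e l) (insSFun d S j hj y e l))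
    rw [e3, Matrix.sum_apply]
    refine Finset.sum_congr rfl fun u _ => ?_
    rw [← Finset.mul_sum]
    have e4 : ∀ e : {l : {i : Fin N // i ∈ S} // l ≠ ⟨j, hj⟩} → Fin d,
        ∏ l, σL u l (insSFun d S j hj x e l) (insSFun d S j hj y e l)
        = σL u ⟨j, hj⟩ x y
          * ∏ l ∈ Finset.univ.erase (⟨j, hj⟩ : {i : Fin N // i ∈ S}),
            σL u l (insSFun d S j hj x e l) (insSFun d S j hj y e l) := by
      intro e
      rw [← Finset.mul_prod_erase Finset.univ _ (Finset.mem_univ ⟨j, hj⟩)]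
      congr 1
      simp [insSFun]
    simp only [e4]
    simp only [← Finset.mul_sum]
    have e5 : ∑ e : {l : {i : Fin N // i ∈ S} // l ≠ ⟨j, hj⟩} → Fin d,
        ∏ l ∈ Finset.univ.erase (⟨j, hj⟩ : {i : Fin N // i ∈ S}),
          σL u l (insSFun d S j hj x e l) (insSFun d S j hj y e l) = 1 := by
      have e6 : ∀ e : {l : {i : Fin N // i ∈ S} // l ≠ ⟨j, hj⟩} → Fin d,
          ∏ l ∈ Finset.univ.erase (⟨j, hj⟩ : {i : Fin N // i ∈ S}),
            σL u l (insSFun d S j hj x e l) (insSFun d S j hj y e l)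
          = ∏ l' : {l : {i : Fin N // i ∈ S} // l ≠ ⟨j, hj⟩}, σL u l'.1 (e l') (e l') := by
        intro e
        rw [Finset.prod_subtype
          (p := fun l : {i : Fin N // i ∈ S} => l ≠ ⟨j, hj⟩)
          (Finset.univ.erase (⟨j, hj⟩ : {i : Fin N // i ∈ S}))
          (by simp) (fun l => σL u l (insSFun d S j hj x e l) (insSFun d S j hj y e l))]
        refine Finset.prod_congr rfl fun l' _ => ?_
        simp [insSFun, l'.2]
      simp only [e6]
      have hsf := sum_fun_prod (κ := {l : {i : Fin N // i ∈ S} // l ≠ ⟨j, hj⟩}) (δ := Fin d)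
        (fun l' z => σL u l'.1 z z)
      rw [hsf]
      refine Finset.prod_eq_one fun l' _ => ?_
      have h := hσL2 u l'.1
      simp only [Matrix.trace, Matrix.diag] at h
      exact h
    rw [e5, mul_one, Matrix.smul_apply, Complex.real_smul]
  -- Step C2–C4 : conclude
  set T : ι' → Matrix ({i : Fin N // i ∈ S} → Fin d) ({i : Fin N // i ∈ S} → Fin d) ℂ :=
    fun u => Matrix.of fun a b => ∏ l, σL u l (a l) (b l) with hT
  have hWmat : W = ∑ u, Q u • T u := by
    ext a b
    rw [hBfull, Matrix.sum_apply]
    refine Finset.sum_congr rfl fun u _ => ?_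
    rw [Matrix.smul_apply, Complex.real_smul, hT]
    rfl
  have hTmul : ∀ u u', (T u * T u').trace = ∏ l, (σL u l * σL u' l).trace := by
    intro u u'
    rw [hT]
    have h := trace_tensor_of (fun l => σL u l) (fun l => σL u' l)
    exact h
  calc (W * W).trace
      = ∑ u, ∑ u', ((Q u * Q u' : ℝ) : ℂ) * (T u * T u').trace := by
        rw [hWmat, trace_sum_smul_sq]
    _ = ∑ u, ∑ u', ((Q u * Q u' : ℝ) : ℂ) * ∏ l, (σL u l * σL u' l).trace := by
        refine Finset.sum_congr rfl fun u _ => Finset.sum_congr rfl fun u' _ => ?_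
        rw [hTmul]
    _ ≤ ∑ u, ∑ u', ((Q u * Q u' : ℝ) : ℂ) * (σL u ⟨j, hj⟩ * σL u' ⟨j, hj⟩).trace := by
        refine Finset.sum_le_sum fun u _ => Finset.sum_le_sum fun u' _ => ?_
        have hnn : 0 ≤ ((Q u * Q u' : ℝ) : ℂ) := by
          rw [Complex.zero_le_real]
          exact mul_nonneg (hQ u) (hQ u')
        have h8 : ∏ l, (σL u l * σL u' l).trace ≤ (σL u ⟨j, hj⟩ * σL u' ⟨j, hj⟩).trace := by
          rw [← Finset.mul_prod_erase Finset.univ _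
            (Finset.mem_univ (⟨j, hj⟩ : {i : Fin N // i ∈ S}))]
          have h9 : ∏ l ∈ Finset.univ.erase (⟨j, hj⟩ : {i : Fin N // i ∈ S}),
              (σL u l * σL u' l).trace ≤ 1 :=
            Finset.prod_le_one (fun l _ => trace_mul_nonneg (hσL1 u l) (hσL1 u' l))
              (fun l _ => trace_mul_le_one (hσL1 u l) (hσL1 u' l) (hσL2 u l) (hσL2 u' l))
          have h10 : 0 ≤ (σL u ⟨j, hj⟩ * σL u' ⟨j, hj⟩).trace :=
            trace_mul_nonneg (hσL1 u _) (hσL1 u' _)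
          exact mul_le_of_le_one_right h10 h9
        exact mul_le_mul_of_nonneg_left h8 hnn
    _ = (reduced ρ j * reduced ρ j).trace := by
        rw [hC1, trace_sum_smul_sq]


/-- Theorem 3 of the paper: a mixture, with strictly positive weights, of `N`-partite pure
states each of whose single-site partial traces is fully separable, is genuinely multipartite
entangled as soon as every one-qudit reduced purity is strictly smaller than the total
purity. -/
theorem mixture_genuinely_entangled
    (N d M : ℕ) (hN : 3 ≤ N)
    (Φ : Fin M → (Fin N → Fin d) → ℂ)
    (hunit : ∀ k, ∑ a, ‖Φ k a‖ ^ 2 = 1)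
    (hsep : ∀ k, ∀ j : Fin N,
      FullySeparableOn {i : Fin N // i ≠ j} d (traceOut (pureMat (Φ k)) j))
    (lam : Fin M → ℝ) (h0 : ∀ k, 0 < lam k) (h1 : ∑ k, lam k = 1)
    (ρ : Matrix (Fin N → Fin d) (Fin N → Fin d) ℂ)
    (hρ : ρ = ∑ k, lam k • pureMat (Φ k))
    (hcrit : ∀ j : Fin N, (reduced ρ j * reduced ρ j).trace < (ρ * ρ).trace) :
    ∀ S : Finset (Fin N), S.Nonempty → S ≠ Finset.univ → ¬ SepAcross S ρ := by
  classical
  intro S hSne hSuniv hsepS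
  obtain ⟨j, hj⟩ := hSne
  obtain ⟨j₀, hj₀⟩ : ∃ j₀, j₀ ∉ S := by
    by_contra hcon
    push_neg at hcon
    exact hSuniv (Finset.eq_univ_iff_forall.mpr hcon)
  obtain ⟨m, p, A, B, hp, hpsum, hA, hB, hrep⟩ := hsepS
  choose m' q σ hpack using fun k => hsep k j₀
  -- the entries of `∑ i, p i • A i` are the partial trace of `ρ` over `Sᶜ`
  have hW : ∀ a b, (∑ i, p i • A i) a b
      = ∑ c : {i : Fin N // i ∉ S} → Fin d, ρ (glueFun d S a c) (glueFun d S b c) := by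
    intro a b
    have hra : ∀ c : {i : Fin N // i ∉ S} → Fin d,
        (fun k : {i : Fin N // i ∈ S} => glueFun d S a c k.1) = a := by
      intro c; funext k
      have hk := k.2
      simp [glueFun, hk]
    have hrb : ∀ c : {i : Fin N // i ∉ S} → Fin d,
        (fun k : {i : Fin N // i ∈ S} => glueFun d S b c k.1) = b := by
      intro c; funext k
      have hk := k.2
      simp [glueFun, hk]
    have hrc : ∀ c : {i : Fin N // i ∉ S} → Fin d,
        (fun k : {i : Fin N // i ∉ S} => glueFun d S a c k.1) = c := by
      intro c; funext k
      have hk := k.2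
      simp [glueFun, hk]
    have hrd : ∀ c : {i : Fin N // i ∉ S} → Fin d,
        (fun k : {i : Fin N // i ∉ S} => glueFun d S b c k.1) = c := by
      intro c; funext k
      have hk := k.2
      simp [glueFun, hk]
    have h1 : ∀ c : {i : Fin N // i ∉ S} → Fin d,
        ρ (glueFun d S a c) (glueFun d S b c) = ∑ i, (p i : ℂ) * A i a b * B i c c := by
      intro c
      rw [hrep (glueFun d S a c) (glueFun d S b c), hra c, hrb c, hrc c, hrd c]
    simp only [h1]
    have h2 := Finset.sum_comm (s := (Finset.univ : Finset ({i : Fin N // i ∉ S} → Fin d)))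
      (t := (Finset.univ : Finset (Fin m)))
      (f := fun c i => (p i : ℂ) * A i a b * B i c c)
    rw [h2, Matrix.sum_apply]
    refine Finset.sum_congr rfl fun i _ => ?_
    rw [← Finset.mul_sum]
    have h3 : ∑ c : {i : Fin N // i ∉ S} → Fin d, B i c c = 1 := by
      have h := (hB i).2
      simp only [Matrix.trace, Matrix.diag] at h
      exact h
    rw [h3, mul_one, Matrix.smul_apply, Complex.real_smul]
  -- the partial trace of `ρ` over site `j₀` in fully separable form
  have hrepτ : ∀ a b : {i : Fin N // i ≠ j₀} → Fin d,
      traceOut ρ j₀ a b = ∑ u : (Σ k : Fin M, Fin (m' k)),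
        ((lam u.1 * q u.1 u.2 : ℝ) : ℂ) * ∏ l, σ u.1 u.2 l (a l) (b l) := by
    intro a b
    have h1 : traceOut ρ j₀ a b = ∑ k, (lam k : ℂ) * traceOut (pureMat (Φ k)) j₀ a b := by
      show (∑ x : Fin d, ρ (insertAt j₀ x a) (insertAt j₀ x b)) = _
      simp only [hρ, Matrix.sum_apply, Matrix.smul_apply]
      have h2 := Finset.sum_comm (s := (Finset.univ : Finset (Fin d)))
        (t := (Finset.univ : Finset (Fin M)))
        (f := fun x k => lam k • pureMat (Φ k) (insertAt j₀ x a) (insertAt j₀ x b))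
      rw [h2]
      refine Finset.sum_congr rfl fun k _ => ?_
      have h3 : traceOut (pureMat (Φ k)) j₀ a b
          = ∑ x : Fin d, pureMat (Φ k) (insertAt j₀ x a) (insertAt j₀ x b) := rfl
      rw [h3, Finset.mul_sum]
      refine Finset.sum_congr rfl fun x _ => ?_
      rw [Complex.real_smul]
    rw [h1]
    rw [← Finset.univ_sigma_univ, Finset.sum_sigma]
    refine Finset.sum_congr rfl fun k _ => ?_
    rw [(hpack k).2.2.2 a b, Finset.mul_sum]
    refine Finset.sum_congr rfl fun t _ => ?_
    push_cast
    ring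
  -- combine
  have step1 := stepA S p A B hp hA hB ρ hrep
  have step2 := stepBC S j j₀ hj hj₀ ρ
    (fun u : (Σ k : Fin M, Fin (m' k)) => lam u.1 * q u.1 u.2)
    (fun u => mul_nonneg (h0 u.1).le ((hpack u.1).1 u.2))
    (fun u => σ u.1 u.2) (fun u l => (hpack u.1).2.2.1 u.2 l) hrepτ _ hW
  exact lt_irrefl _ ((hcrit j).trans_le (step1.trans step2))
end
end

section
/- Let N ≥ 2 and 1 ≤ m ≤ N−1, and let the N-qubit Dicke state D_m^N : (Fin N → Fin 2) → ℂ be defined by D_m^N(f) = (binomial N m)^{-1/2} if exactly m of the values f(k) equal 1, and 0 otherwise. Then for every subsystem j : Fin N, the one-qubit reduced density matrix of |D_m^N⟩⟨D_m^N| at site j equals (binomial (N−1) m · |0⟩⟨0| + binomial (N−1) (m−1) · |1⟩⟨1|) / binomial N m. Moreover, this reduced matrix equals (1/2)·I_2 if and only if N = 2m. -/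
noncomputable section

/-- The `N`-qubit Dicke state with `m` excitations: amplitude `(binom N m)^(-1/2)` on the
basis states with exactly `m` ones, and `0` elsewhere. -/
def dicke (N m : ℕ) : (Fin N → Fin 2) → ℂ :=
  fun f => if (Finset.univ.filter fun k => f k = 1).card = m
    then (Real.sqrt (N.choose m) : ℂ)⁻¹ else 0

lemma fin2_cases (x : Fin 2) : x = 0 ∨ x = 1 := by omega

lemma card_funs {α : Type*} [Fintype α] [DecidableEq α] (m' : ℕ) :
    (Finset.univ.filter fun g : α → Fin 2 =>
        (Finset.univ.filter fun i => g i = 1).card = m').card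
      = (Fintype.card α).choose m' := by
  rw [← Finset.card_univ, ← Finset.card_powersetCard m' Finset.univ]
  refine Finset.card_bij' (fun g _ => Finset.univ.filter fun i => g i = 1)
    (fun s _ => fun i => if i ∈ s then 1 else 0) ?_ ?_ ?_ ?_
  · intro g hg
    simpa [Finset.mem_powersetCard_univ] using (Finset.mem_filter.mp hg).2
  · intro s hs
    simp only [Finset.mem_powersetCard_univ] at hs
    simp only [Finset.mem_filter, Finset.mem_univ, true_and, ← hs]
    congr 1
    ext i
    simp only [Finset.mem_filter, Finset.mem_univ, true_and]
    by_cases h : i ∈ s <;> simp [h]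
  · intro g hg
    ext i
    rcases fin2_cases (g i) with h | h <;> simp [h]
  · intro s hs
    ext i
    by_cases h : i ∈ s <;> simp [h]

lemma count_insertAt {N : ℕ} (j : Fin N) (x : Fin 2) (g : {i : Fin N // i ≠ j} → Fin 2) :
    (Finset.univ.filter fun k => insertAt j x g k = 1).card
      = (Finset.univ.filter fun i => g i = 1).card + if x = 1 then 1 else 0 := by
  classical
  rw [Finset.card_filter, Finset.card_filter]
  rw [← Finset.sum_erase_add _ _ (Finset.mem_univ j)]
  have h1 : ∀ i ∈ Finset.univ.erase j,
      (if insertAt j x g i = 1 then 1 else 0)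
        = (fun i : Fin N => if h : i = j then 0 else if g ⟨i, h⟩ = 1 then 1 else 0) i := by
    intro i hi
    have hij : i ≠ j := Finset.ne_of_mem_erase hi
    simp [insertAt, hij]
  rw [Finset.sum_congr rfl h1]
  have h2 : insertAt j x g j = x := by simp [insertAt]
  rw [h2]
  congr 1
  have h3 : ∀ i : Fin N, i ∈ Finset.univ.erase j ↔ i ≠ j := by
    intro i; simp [Finset.mem_erase]
  rw [Finset.sum_subtype _ h3
    (fun i : Fin N => if h : i = j then 0 else if g ⟨i, h⟩ = 1 then 1 else 0)]
  refine Finset.sum_congr rfl fun i _ => ?_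
  simp [i.prop]

lemma card_ne {N : ℕ} (j : Fin N) : Fintype.card {i : Fin N // i ≠ j} = N - 1 := by
  rw [Fintype.card_subtype_compl, Fintype.card_subtype_eq, Fintype.card_fin]

lemma E_sum : Matrix.single (0 : Fin 2) (0 : Fin 2) (1 : ℂ)
    + Matrix.single (1 : Fin 2) (1 : Fin 2) (1 : ℂ) = 1 := by
  ext i k
  fin_cases i <;> fin_cases k <;>
    simp [Matrix.single, Matrix.one_apply]

/-- Every one-qubit reduced density matrix of the Dicke state `|D_m^N⟩⟨D_m^N|` equals
`(binom (N-1) m • |0⟩⟨0| + binom (N-1) (m-1) • |1⟩⟨1|) / binom N m`; it is maximally mixed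
if and only if `N = 2m`. -/
theorem dicke_reduced (N m : ℕ) (hN : 2 ≤ N) (hm : 1 ≤ m) (hmN : m ≤ N - 1) :
    ∀ j : Fin N,
      reduced (pureMat (dicke N m)) j
        = ((N.choose m : ℂ))⁻¹ •
            (((N - 1).choose m : ℂ) • Matrix.single (0 : Fin 2) (0 : Fin 2) (1 : ℂ)
              + ((N - 1).choose (m - 1) : ℂ)
                  • Matrix.single (1 : Fin 2) (1 : Fin 2) (1 : ℂ)) ∧
      (reduced (pureMat (dicke N m)) j = (2 : ℂ)⁻¹ • 1 ↔ N = 2 * m) := by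
  intro j
  have hmN' : m ≤ N := le_trans hmN (Nat.sub_le _ _)
  have hC0 : N.choose m ≠ 0 := (Nat.choose_pos hmN').ne'
  have hCc : ((N.choose m : ℂ)) ≠ 0 := by exact_mod_cast hC0
  have ha0 : (N - 1).choose m ≠ 0 := (Nat.choose_pos hmN).ne'
  have hb0 : (N - 1).choose (m - 1) ≠ 0 :=
    (Nat.choose_pos (le_trans (Nat.sub_le _ _) hmN)).ne'
  -- amplitude square
  have hamp : ((Real.sqrt (N.choose m) : ℂ)⁻¹) * (starRingEnd ℂ) ((Real.sqrt (N.choose m) : ℂ)⁻¹)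
      = ((N.choose m : ℂ))⁻¹ := by
    have hconj : (starRingEnd ℂ) ((Real.sqrt (N.choose m) : ℂ)⁻¹)
        = (Real.sqrt (N.choose m) : ℂ)⁻¹ := by
      rw [map_inv₀, Complex.conj_ofReal]
    rw [hconj, ← mul_inv, ← Complex.ofReal_mul,
      Real.mul_self_sqrt (by positivity)]
    push_cast
    ring
  have hterm : ∀ (x : Fin 2) (g : {i : Fin N // i ≠ j} → Fin 2),
      dicke N m (insertAt j x g)
        = if (Finset.univ.filter fun i => g i = 1).card + (if x = 1 then 1 else 0) = m
          then (Real.sqrt (N.choose m) : ℂ)⁻¹ else 0 := by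
    intro x g
    simp only [dicke, count_insertAt]
  have key : reduced (pureMat (dicke N m)) j
      = ((N.choose m : ℂ))⁻¹ •
          (((N - 1).choose m : ℂ) • Matrix.single (0 : Fin 2) (0 : Fin 2) (1 : ℂ)
            + ((N - 1).choose (m - 1) : ℂ)
                • Matrix.single (1 : Fin 2) (1 : Fin 2) (1 : ℂ)) := by
    ext x y
    simp only [reduced, pureMat, Matrix.of_apply, hterm,
      apply_ite (starRingEnd ℂ), map_zero, ite_mul, zero_mul, mul_ite, mul_zero, hamp]
    fin_cases x <;> fin_cases y
    · -- (0,0)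
      norm_num [Matrix.single]
      rw [← Finset.sum_filter,
        Finset.sum_congr rfl (fun a ha => if_pos (Finset.mem_filter.mp ha).2),
        Finset.sum_const, card_funs, card_ne, nsmul_eq_mul]
      ring
    · -- (0,1)
      norm_num [Matrix.single]
      refine Finset.sum_eq_zero fun g _ => ?_
      split_ifs with h1 h2
      · omega
      · rfl
      · rfl
    · -- (1,0)
      norm_num [Matrix.single]
      refine Finset.sum_eq_zero fun g _ => ?_
      split_ifs with h1 h2
      · omega
      · rfl
      · rfl
    · -- (1,1)
      norm_num [Matrix.single]
      have hc : ∀ c : ℕ, (c + 1 = m) ↔ (c = m - 1) := fun c => by omega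
      simp only [hc]
      rw [← Finset.sum_filter,
        Finset.sum_congr rfl (fun a ha => if_pos (Finset.mem_filter.mp ha).2),
        Finset.sum_const, card_funs, card_ne, nsmul_eq_mul]
      ring
  refine ⟨key, ?_⟩
  rw [key]
  constructor
  · intro h
    have h00 := congrFun (congrFun h 0) 0
    have h11 := congrFun (congrFun h 1) 1
    simp only [Matrix.smul_apply, Matrix.add_apply, Matrix.single_apply_same,
      Matrix.single_apply_of_ne, Matrix.one_apply_eq, smul_eq_mul, mul_one, mul_zero,
      add_zero, zero_add, Fin.isValue, one_ne_zero, ne_eq, not_false_eq_true,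
      zero_ne_one, Matrix.single_apply, and_self, and_false, false_and, if_true, if_false] at h00 h11
    have hab : ((N - 1).choose m : ℂ) = ((N - 1).choose (m - 1) : ℂ) := by
      have := h00.trans h11.symm
      field_simp at this
      exact_mod_cast this
    have habn : (N - 1).choose m = (N - 1).choose (m - 1) := by exact_mod_cast hab
    have hrec := Nat.choose_succ_right_eq (N - 1) (m - 1)
    rw [Nat.sub_add_cancel hm] at hrec
    rw [habn] at hrec
    have hmm := Nat.eq_of_mul_eq_mul_left (Nat.pos_of_ne_zero hb0) hrec
    omega
  · intro h
    subst h
    have hsym : (2 * m - 1).choose m = (2 * m - 1).choose (m - 1) := by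
      rw [← Nat.choose_symm (by omega : m ≤ 2 * m - 1)]
      congr 1
      omega
    have hpascal : (2 * m).choose m = (2 * m - 1).choose (m - 1) + (2 * m - 1).choose m := by
      obtain ⟨k, rfl⟩ : ∃ k, m = k + 1 := ⟨m - 1, by omega⟩
      have h1 : 2 * (k + 1) = (2 * (k + 1) - 1) + 1 := by omega
      conv_lhs => rw [h1, Nat.choose_succ_succ]
      simp
    rw [hsym, hpascal, ← hsym]
    ext i k
    have hE := E_sum
    rw [← two_mul]
    have ha : ((2 * m - 1).choose m : ℂ) ≠ 0 := by
      rw [hsym]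
      exact_mod_cast (Nat.choose_pos (by omega : m - 1 ≤ 2 * m - 1)).ne'
    rw [hsym]
    simp only [Matrix.smul_apply, Matrix.add_apply, smul_eq_mul]
    rw [show (((2 * m - 1).choose (m - 1) : ℂ)) * Matrix.single (0:Fin 2) 0 (1:ℂ) i k
        + (((2 * m - 1).choose (m - 1) : ℂ)) * Matrix.single (1:Fin 2) 1 (1:ℂ) i k
      = ((2 * m - 1).choose (m - 1) : ℂ) * (1 : Matrix (Fin 2) (Fin 2) ℂ) i k by
        rw [← hE]; simp [Matrix.add_apply]; ring]
    have hb : ((2 * m - 1).choose (m - 1) : ℂ) ≠ 0 := by rw [← hsym]; exact ha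
    push_cast
    field_simp
end
end

section
/- Let N ≥ 2, d ≥ 2 and j : Fin N. Define the N-qudit state Φ : (Fin N → Fin d) → ℂ by Φ(a) = 1/√d if there exists k : Fin d with a(i) = k for all i ≠ j and a(j) = k+1 (addition mod d), and Φ(a) = 0 otherwise. Then Φ is a unit vector and for every subsystem i : Fin N the one-qudit reduced density matrix of |Φ⟩⟨Φ| at site i equals (1/d)·I_d. -/
noncomputable section

/-- The state `|Φ_d^j⟩ = (1/√d) ∑ₖ |k⟩^{⊗(j-1)} |k+1⟩ |k⟩^{⊗(N-j)}`, with `k + 1` taken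
modulo `d`: amplitude `1/√d` on assignments equal to some `k` away from site `j` and to
`k + 1` at site `j`, and `0` elsewhere. -/
def phiShift (N d : ℕ) [NeZero d] (j : Fin N) : (Fin N → Fin d) → ℂ :=
  fun a => if ∃ k : Fin d, (∀ i, i ≠ j → a i = k) ∧ a j = k + 1
    then (Real.sqrt d : ℂ)⁻¹ else 0

/-- The basis state with value `k` everywhere except `k+1` at site `j`. -/
def fK {N d : ℕ} [NeZero d] (j : Fin N) (k : Fin d) : Fin N → Fin d :=
  fun i => if i = j then k + 1 else k

lemma fK_inj {N d : ℕ} [NeZero d] (j : Fin N) : Function.Injective (fK (d := d) j) := by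
  intro k k' h
  have h2 : k + 1 = k' + 1 := by simpa [fK] using congrFun h j
  exact add_right_cancel h2

lemma cond_iff {N d : ℕ} [NeZero d] (j : Fin N) (a : Fin N → Fin d) :
    (∃ k : Fin d, (∀ i, i ≠ j → a i = k) ∧ a j = k + 1) ↔ ∃ k, a = fK j k := by
  constructor
  · rintro ⟨k, h1, h2⟩
    refine ⟨k, funext fun i => ?_⟩
    by_cases h : i = j
    · subst h; simpa [fK] using h2
    · simpa [fK, h] using h1 i h
  · rintro ⟨k, rfl⟩
    exact ⟨k, fun i hi => by simp [fK, hi], by simp [fK]⟩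

lemma phi_eq {N d : ℕ} [NeZero d] (j : Fin N) (a : Fin N → Fin d) :
    phiShift N d j a = if ∃ k, a = fK j k then ((Real.sqrt d : ℝ) : ℂ)⁻¹ else 0 := by
  simp only [phiShift, cond_iff]

/-- `|Φ_d^j⟩` is a unit vector and all of its one-qudit reduced density matrices are
maximally mixed. -/
theorem phiShift_reduced_maximallyMixed
    (N d : ℕ) [NeZero d] (hN : 2 ≤ N) (hd : 2 ≤ d) (j : Fin N) :
    (∑ a, ‖phiShift N d j a‖ ^ 2 = 1) ∧
    (∀ i : Fin N, reduced (pureMat (phiShift N d j)) i = (d : ℂ)⁻¹ • 1) := by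
  have hd0 : (d : ℝ) ≠ 0 := by positivity
  constructor
  · have habs : ∀ a, ‖phiShift N d j a‖ ^ 2
        = if ∃ k, a = fK j k then (d : ℝ)⁻¹ else 0 := by
      intro a
      rw [phi_eq]
      split
      · rw [norm_inv, Complex.norm_real, Real.norm_eq_abs, abs_of_nonneg (Real.sqrt_nonneg _), inv_pow,
          Real.sq_sqrt (by positivity)]
      · simp
    rw [Finset.sum_congr rfl fun a _ => habs a, Finset.sum_ite, Finset.sum_const,
      Finset.sum_const_zero, add_zero]
    have hfilt : Finset.univ.filter (fun a : Fin N → Fin d => ∃ k, a = fK j k)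
        = Finset.univ.image (fK j) := by
      ext a; simp [eq_comm]
    rw [hfilt, Finset.card_image_of_injective _ (fK_inj j), Finset.card_univ, Fintype.card_fin,
      nsmul_eq_mul, mul_inv_cancel₀ hd0]
  · intro i
    ext x y
    have key : ∀ (k : Fin d) (x : Fin d) (g : {m : Fin N // m ≠ i} → Fin d),
        insertAt i x g = fK j k → x = fK j k i ∧ ∀ m (hm : m ≠ i), g ⟨m, hm⟩ = fK j k m := by
      intro k x g h
      constructor
      · have := congrFun h i; simpa [insertAt] using this
      · intro m hm; have := congrFun h m; simpa [insertAt, hm] using this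
    -- a witness index different from i
    have : Nontrivial (Fin N) := Fin.nontrivial_iff_two_le.mpr hN
    obtain ⟨m₀, hm₀⟩ := exists_ne i
    have kcancel : ∀ k k' : Fin d, fK j k m₀ = fK j k' m₀ → k = k' := by
      intro k k' h
      by_cases hmj : m₀ = j
      · subst hmj; simp only [fK, if_pos rfl] at h; exact add_right_cancel h
      · simpa [fK, hmj] using h
    by_cases hxy : x = y
    · subst hxy
      -- the unique k with fK j k i = x
      set k₀ : Fin d := if i = j then x - 1 else x with hk₀def
      have hk₀ : fK j k₀ i = x := by
        by_cases h : i = j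
        · simp [fK, h, hk₀def, sub_add_cancel]
        · simp [fK, h, hk₀def]
      set g₀ : {m : Fin N // m ≠ i} → Fin d := fun m => fK j k₀ m.1 with hg₀def
      have hins : insertAt i x g₀ = fK j k₀ := by
        funext m
        by_cases h : m = i
        · subst h; simp [insertAt, hk₀]
        · simp [insertAt, h, hg₀def]
      have huniq : ∀ k : Fin d, fK j k i = x → k = k₀ := by
        intro k hk
        by_cases h : i = j
        · subst h
          have : k + 1 = k₀ + 1 := by
            rw [show k₀ + 1 = x from by simpa [fK] using hk₀]
            simpa [fK] using hk
          exact add_right_cancel this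
        · have h1 : k = x := by simpa [fK, h] using hk
          have h2 : k₀ = x := by simpa [fK, h] using hk₀
          rw [h1, h2]
      rw [reduced, Matrix.of_apply,
        Finset.sum_eq_single g₀ ?h1 (by simp)]
      · rw [pureMat, Matrix.of_apply, hins, phi_eq, if_pos ⟨k₀, rfl⟩]
        rw [← Complex.ofReal_inv, Complex.conj_ofReal, ← Complex.ofReal_mul,
          ← mul_inv, Real.mul_self_sqrt (by positivity)]
        simp [Matrix.one_apply]
      · intro g _ hg
        rw [pureMat, Matrix.of_apply]
        by_cases hΦ : ∃ k, insertAt i x g = fK j k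
        · obtain ⟨k, hk⟩ := hΦ
          obtain ⟨hx, hgm⟩ := key k x g hk
          have hkk : k = k₀ := huniq k hx.symm
          exfalso
          apply hg
          funext m
          rw [hg₀def]
          have := hgm m.1 m.2
          rw [this, hkk]
        · rw [phi_eq, if_neg hΦ, zero_mul]
    · -- off-diagonal
      rw [reduced, Matrix.of_apply]
      have hz : ∀ g : {m : Fin N // m ≠ i} → Fin d,
          pureMat (phiShift N d j) (insertAt i x g) (insertAt i y g) = 0 := by
        intro g
        rw [pureMat, Matrix.of_apply]
        by_cases hA : ∃ k, insertAt i x g = fK j k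
        · obtain ⟨k, hk⟩ := hA
          by_cases hB : ∃ k', insertAt i y g = fK j k'
          · obtain ⟨k', hk'⟩ := hB
            obtain ⟨hx, hgm⟩ := key k x g hk
            obtain ⟨hy, hgm'⟩ := key k' y g hk'
            have hkk : k = k' := kcancel k k' (by rw [← hgm m₀ hm₀, hgm' m₀ hm₀])
            exact absurd (by rw [hx, hkk, ← hy]) hxy
          · rw [phi_eq (a := insertAt i y g), if_neg hB, map_zero, mul_zero]
        · rw [phi_eq (a := insertAt i x g), if_neg hA, zero_mul]
      rw [Finset.sum_congr rfl fun g _ => hz g, Finset.sum_const_zero]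
      simp [Matrix.one_apply, Ne.symm, hxy]
end
end
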